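/- arXiv:1103.1468 — 5 statements merged into one kernel-verified Lean document; each statement's English description precedes it below -/
import Mathlib

section
/- Let P¹ and P² be two orthogonal 2-dimensional planes in ℝ⁴ (i.e. every vector of P¹ is orthogonal to every vector of P²), and let p¹, p² denote the orthogonal projections onto them, extended to linear maps ∧₂p^i on 2-vectors. Then for every unit simple 2-vector ξ ∈ ∧₂ℝ⁴, |p¹(ξ)| + |p²(ξ)| ≤ 1. -/
open Metric MeasureTheory Submodule
open scoped ENNReal NNReal

/-- The norm `|x ∧ y|` of the simple 2-vector `x ∧ y` in a real inner product space,
given by the area of the parallelogram spanned by `x` and `y`. -/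
noncomputable def wedgeNorm {V : Type*} [NormedAddCommGroup V] [InnerProductSpace ℝ V]
    (x y : V) : ℝ :=
  Real.sqrt (‖x‖ ^ 2 * ‖y‖ ^ 2 - (inner ℝ x y : ℝ) ^ 2)

lemma wedgeNorm_le {V : Type*} [NormedAddCommGroup V] [InnerProductSpace ℝ V]
    (x y : V) : wedgeNorm x y ≤ ‖x‖ * ‖y‖ := by
  have : wedgeNorm x y ≤ Real.sqrt (‖x‖ ^ 2 * ‖y‖ ^ 2) := by
    apply Real.sqrt_le_sqrt; nlinarith [sq_nonneg (inner ℝ x y : ℝ)]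
  calc wedgeNorm x y ≤ Real.sqrt (‖x‖^2 * ‖y‖^2) := this
    _ = ‖x‖ * ‖y‖ := by
        rw [← mul_pow, Real.sqrt_sq (by positivity)]

lemma proj_sq_le (P1 P2 : Submodule ℝ (EuclideanSpace ℝ (Fin 4)))
    (horth : ∀ v ∈ P1, ∀ w ∈ P2, (inner ℝ v w : ℝ) = 0)
    (x : EuclideanSpace ℝ (Fin 4)) :
    ‖(orthogonalProjection P1 x : EuclideanSpace ℝ (Fin 4))‖ ^ 2
      + ‖(orthogonalProjection P2 x : EuclideanSpace ℝ (Fin 4))‖ ^ 2 ≤ ‖x‖ ^ 2 := by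
  set a := (orthogonalProjection P1 x : EuclideanSpace ℝ (Fin 4))
  set b := (orthogonalProjection P2 x : EuclideanSpace ℝ (Fin 4))
  have ha : (inner ℝ (x - a) a : ℝ) = 0 :=
    starProjection_inner_eq_zero (K := P1) x a (orthogonalProjection P1 x).2
  have hb : (inner ℝ (x - b) b : ℝ) = 0 :=
    starProjection_inner_eq_zero (K := P2) x b (orthogonalProjection P2 x).2
  have hab : (inner ℝ a b : ℝ) = 0 :=
    horth a (orthogonalProjection P1 x).2 b (orthogonalProjection P2 x).2
  have hxa : (inner ℝ x a : ℝ) = ‖a‖ ^ 2 := by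
    have := ha
    rw [inner_sub_left] at this
    rw [real_inner_self_eq_norm_sq] at this
    linarith
  have hxb : (inner ℝ x b : ℝ) = ‖b‖ ^ 2 := by
    have := hb
    rw [inner_sub_left] at this
    rw [real_inner_self_eq_norm_sq] at this
    linarith
  have h0 : (0:ℝ) ≤ ‖x - a - b‖ ^ 2 := by positivity
  rw [← real_inner_self_eq_norm_sq] at h0
  simp only [inner_sub_left, inner_sub_right, real_inner_self_eq_norm_sq,
    real_inner_comm x a, real_inner_comm x b, real_inner_comm b a] at h0
  have hab' : (inner ℝ b a : ℝ) = 0 := by rw [real_inner_comm]; exact hab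
  linarith

/-- If `P¹, P²` are two orthogonal 2-dimensional planes in `ℝ⁴` and `p¹, p²` the orthogonal
projections onto them, then for every unit simple 2-vector `ξ = x ∧ y` (with `x, y`
orthonormal), `|∧₂p¹(ξ)| + |∧₂p²(ξ)| ≤ 1`. -/
theorem sum_proj_le_one_of_orthogonal_planes
    (P1 P2 : Submodule ℝ (EuclideanSpace ℝ (Fin 4)))
    (h1 : Module.finrank ℝ P1 = 2) (h2 : Module.finrank ℝ P2 = 2)
    (horth : ∀ v ∈ P1, ∀ w ∈ P2, (inner ℝ v w : ℝ) = 0)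
    (x y : EuclideanSpace ℝ (Fin 4))
    (hx : ‖x‖ = 1) (hy : ‖y‖ = 1) (hxy : (inner ℝ x y : ℝ) = 0) :
    wedgeNorm ((orthogonalProjection P1 x : EuclideanSpace ℝ (Fin 4)))
        ((orthogonalProjection P1 y : EuclideanSpace ℝ (Fin 4)))
      + wedgeNorm ((orthogonalProjection P2 x : EuclideanSpace ℝ (Fin 4)))
        ((orthogonalProjection P2 y : EuclideanSpace ℝ (Fin 4))) ≤ 1 := by
  set a1 := (orthogonalProjection P1 x : EuclideanSpace ℝ (Fin 4))
  set b1 := (orthogonalProjection P1 y : EuclideanSpace ℝ (Fin 4))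
  set a2 := (orthogonalProjection P2 x : EuclideanSpace ℝ (Fin 4))
  set b2 := (orthogonalProjection P2 y : EuclideanSpace ℝ (Fin 4))
  have hX := proj_sq_le P1 P2 horth x
  have hY := proj_sq_le P1 P2 horth y
  rw [hx] at hX; rw [hy] at hY
  have w1 := wedgeNorm_le a1 b1
  have w2 := wedgeNorm_le a2 b2
  have cs : ‖a1‖ * ‖b1‖ + ‖a2‖ * ‖b2‖ ≤ 1 := by
    nlinarith [sq_nonneg (‖a1‖*‖b2‖ - ‖a2‖*‖b1‖), sq_nonneg (‖a1‖*‖b1‖ + ‖a2‖*‖b2‖),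
      norm_nonneg a1, norm_nonneg b1, norm_nonneg a2, norm_nonneg b2,
      sq_nonneg (‖a1‖^2 + ‖a2‖^2 - 1), sq_nonneg (‖b1‖^2 + ‖b2‖^2 - 1)]
  linarith
end

section
/- Let e₁,e₂,e₃,e₄ be an orthonormal basis of ℝ⁴, P¹ the plane spanned by e₁,e₂ and P² the plane spanned by e₃,e₄. If x, y are orthonormal vectors in ℝ⁴ such that the unit simple 2-vector x ∧ y satisfies |p¹(x∧y)| + |p²(x∧y)| = 1 (where p^i are the orthogonal projections on P^i acting on 2-vectors), then there exist an angle α ∈ [0, π/2] and unit vectors v₁,v₂ ∈ P¹, u₁,u₂ ∈ P² with v₁ ⊥ v₂ and u₁ ⊥ u₂ such that x = cos α · v₁ + sin α · u₁ and y = cos α · v₂ + sin α · u₂. -/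
open Metric MeasureTheory Submodule Real
open scoped ENNReal NNReal
open scoped RealInnerProductSpace

lemma aux_pair {E : Type*} [NormedAddCommGroup E] [InnerProductSpace ℝ E]
    (P : Submodule ℝ E) (e f a c : E)
    (he : ‖e‖ = 1) (hf : ‖f‖ = 1) (heP : e ∈ P) (hfP : f ∈ P) (hef : ⟪e, f⟫ = 0)
    (haP : a ∈ P) (hcP : c ∈ P) {r : ℝ} (hr : 0 ≤ r) (hra : ‖a‖ = r) (hrc : ‖c‖ = r)
    (hac : ⟪a, c⟫ = 0) :
    ∃ v1 v2, ‖v1‖ = 1 ∧ ‖v2‖ = 1 ∧ v1 ∈ P ∧ v2 ∈ P ∧ ⟪v1, v2⟫ = 0 ∧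
      r • v1 = a ∧ r • v2 = c := by
  rcases eq_or_lt_of_le hr with h0 | h0
  · have ha0 : a = 0 := norm_eq_zero.mp (by rw [hra, ← h0])
    have hc0 : c = 0 := norm_eq_zero.mp (by rw [hrc, ← h0])
    exact ⟨e, f, he, hf, heP, hfP, hef, by rw [← h0, zero_smul, ha0],
      by rw [← h0, zero_smul, hc0]⟩
  · refine ⟨r⁻¹ • a, r⁻¹ • c, ?_, ?_, P.smul_mem _ haP, P.smul_mem _ hcP, ?_, ?_, ?_⟩
    · rw [norm_smul, hra, Real.norm_eq_abs, abs_inv, abs_of_pos h0, inv_mul_cancel₀ h0.ne']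
    · rw [norm_smul, hrc, Real.norm_eq_abs, abs_inv, abs_of_pos h0, inv_mul_cancel₀ h0.ne']
    · rw [real_inner_smul_left, real_inner_smul_right, hac, mul_zero, mul_zero]
    · rw [smul_smul, mul_inv_cancel₀ h0.ne', one_smul]
    · rw [smul_smul, mul_inv_cancel₀ h0.ne', one_smul]

set_option maxHeartbeats 4000000 in
/-- Equality case of Wirtinger's inequality: if `x ∧ y` is a unit simple 2-vector
(with `x, y` orthonormal) whose projections onto the two orthogonal coordinate planes
`P¹ = span(e₁,e₂)` and `P² = span(e₃,e₄)` satisfy `|p¹(x∧y)| + |p²(x∧y)| = 1`, then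
there are an angle `α ∈ [0, π/2]` and orthonormal pairs `v₁ ⊥ v₂` in `P¹`, `u₁ ⊥ u₂` in `P²`
with `x = cos α v₁ + sin α u₁` and `y = cos α v₂ + sin α u₂`. -/
theorem wirtinger_equality_case
    (b : OrthonormalBasis (Fin 4) ℝ (EuclideanSpace ℝ (Fin 4)))
    (P1 P2 : Submodule ℝ (EuclideanSpace ℝ (Fin 4)))
    (hP1 : P1 = Submodule.span ℝ {b 0, b 1})
    (hP2 : P2 = Submodule.span ℝ {b 2, b 3})
    (x y : EuclideanSpace ℝ (Fin 4))
    (hx : ‖x‖ = 1) (hy : ‖y‖ = 1) (hxy : (inner ℝ x y : ℝ) = 0)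
    (heq : wedgeNorm ((orthogonalProjectionOnto P1 x : EuclideanSpace ℝ (Fin 4)))
        ((orthogonalProjectionOnto P1 y : EuclideanSpace ℝ (Fin 4)))
      + wedgeNorm ((orthogonalProjectionOnto P2 x : EuclideanSpace ℝ (Fin 4)))
        ((orthogonalProjectionOnto P2 y : EuclideanSpace ℝ (Fin 4))) = 1) :
    ∃ α ∈ Set.Icc (0 : ℝ) (π / 2), ∃ v1 v2 u1 u2 : EuclideanSpace ℝ (Fin 4),
      ‖v1‖ = 1 ∧ ‖v2‖ = 1 ∧ ‖u1‖ = 1 ∧ ‖u2‖ = 1 ∧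
      v1 ∈ P1 ∧ v2 ∈ P1 ∧ u1 ∈ P2 ∧ u2 ∈ P2 ∧
      (inner ℝ v1 v2 : ℝ) = 0 ∧ (inner ℝ u1 u2 : ℝ) = 0 ∧
      x = Real.cos α • v1 + Real.sin α • u1 ∧
      y = Real.cos α • v2 + Real.sin α • u2 := by
  have hON := b.orthonormal
  have hb0P : b 0 ∈ P1 := by rw [hP1]; exact subset_span (by simp)
  have hb1P : b 1 ∈ P1 := by rw [hP1]; exact subset_span (by simp)
  have hb2P : b 2 ∈ P2 := by rw [hP2]; exact subset_span (by simp)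
  have hb3P : b 3 ∈ P2 := by rw [hP2]; exact subset_span (by simp)
  -- a vector orthogonal to b 0 and b 1 is orthogonal to all of P1
  have key : ∀ z : EuclideanSpace ℝ (Fin 4), ⟪b 0, z⟫ = 0 → ⟪b 1, z⟫ = 0 →
      ∀ u ∈ P1, ⟪u, z⟫ = 0 := by
    intro z h0 h1 u hu
    rw [hP1] at hu
    induction hu using Submodule.span_induction with
    | mem v hv =>
      simp only [Set.mem_insert_iff, Set.mem_singleton_iff] at hv
      rcases hv with rfl | rfl
      · exact h0
      · exact h1
    | zero => exact inner_zero_left z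
    | add v w _ _ hv hw => rw [inner_add_left, hv, hw, add_zero]
    | smul r v _ hv => rw [real_inner_smul_left, hv, mul_zero]
  have hP2O : P1ᗮ = P2 := by
    apply le_antisymm
    · intro w hw
      rw [Submodule.mem_orthogonal] at hw
      have h0 : ⟪b 0, w⟫ = 0 := hw _ hb0P
      have h1 : ⟪b 1, w⟫ = 0 := hw _ hb1P
      have hsum := b.sum_repr' w
      rw [Fin.sum_univ_four] at hsum
      rw [hP2, ← hsum, h0, h1, zero_smul, zero_smul, zero_add, zero_add]
      exact add_mem (smul_mem _ _ (subset_span (by simp)))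
        (smul_mem _ _ (subset_span (by simp)))
    · rw [hP2, span_le]
      intro w hw
      simp only [Set.mem_insert_iff, Set.mem_singleton_iff] at hw
      rw [SetLike.mem_coe, Submodule.mem_orthogonal]
      rcases hw with rfl | rfl
      · exact key _ (hON.2 (by decide)) (hON.2 (by decide))
      · exact key _ (hON.2 (by decide)) (hON.2 (by decide))
  have hOrth : ∀ u ∈ P1, ∀ w ∈ P2, ⟪u, w⟫ = 0 := by
    intro u hu w hw
    rw [← hP2O, Submodule.mem_orthogonal] at hw
    exact hw u hu
  set a := (orthogonalProjectionOnto P1 x : EuclideanSpace ℝ (Fin 4)) with ha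
  set c := (orthogonalProjectionOnto P1 y : EuclideanSpace ℝ (Fin 4)) with hc
  have haP : a ∈ P1 := Submodule.coe_mem _
  have hcP : c ∈ P1 := Submodule.coe_mem _
  have hxaP2 : x - a ∈ P2 := by
    rw [← hP2O]; exact sub_starProjection_mem_orthogonal x
  have hycP2 : y - c ∈ P2 := by
    rw [← hP2O]; exact sub_starProjection_mem_orthogonal y
  have hprojx : (orthogonalProjectionOnto P2 x : EuclideanSpace ℝ (Fin 4)) = x - a := by
    apply eq_starProjection_of_mem_of_inner_eq_zero hxaP2
    intro w hw
    have h : x - (x - a) = a := by abel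
    rw [h]
    exact hOrth a haP w hw
  have hprojy : (orthogonalProjectionOnto P2 y : EuclideanSpace ℝ (Fin 4)) = y - c := by
    apply eq_starProjection_of_mem_of_inner_eq_zero hycP2
    intro w hw
    have h : y - (y - c) = c := by abel
    rw [h]
    exact hOrth c hcP w hw
  rw [hprojx, hprojy] at heq
  set bb := x - a with hbb
  set d := y - c with hd
  clear_value a c
  have hab0 : ⟪a, bb⟫ = 0 := hOrth a haP bb hxaP2
  have had0 : ⟪a, d⟫ = 0 := hOrth a haP d hycP2
  have hcb0 : ⟪c, bb⟫ = 0 := hOrth c hcP bb hxaP2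
  have hcd0 : ⟪c, d⟫ = 0 := hOrth c hcP d hycP2
  have hxeq : x = a + bb := by rw [hbb]; abel
  have hyeq : y = c + d := by rw [hd]; abel
  clear_value bb d
  set s := (⟪a, c⟫ : ℝ) with hs
  set t := (⟪bb, d⟫ : ℝ) with ht
  have hx2 : ‖a‖ ^ 2 + ‖bb‖ ^ 2 = 1 := by
    have h := norm_add_sq_real a bb
    rw [hab0, ← hxeq, hx] at h
    norm_num at h
    linarith
  have hy2 : ‖c‖ ^ 2 + ‖d‖ ^ 2 = 1 := by
    have h := norm_add_sq_real c d
    rw [hcd0, ← hyeq, hy] at h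
    norm_num at h
    linarith
  have hbc0 : (⟪bb, c⟫ : ℝ) = 0 := by rw [real_inner_comm]; exact hcb0
  have hst : s + t = 0 := by
    have h : (⟪x, y⟫ : ℝ) = 0 := hxy
    rw [hxeq, hyeq, inner_add_left, inner_add_right, inner_add_right, had0, hbc0] at h
    rw [hs, ht]
    linarith [h]
  clear_value s t
  have hCS1 : ‖a‖ ^ 2 * ‖c‖ ^ 2 - s ^ 2 ≥ 0 := by
    have h1 := real_inner_mul_inner_self_le a c
    rw [real_inner_self_eq_norm_sq a, real_inner_self_eq_norm_sq c, ← hs] at h1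
    nlinarith [h1]
  have hCS2 : ‖bb‖ ^ 2 * ‖d‖ ^ 2 - t ^ 2 ≥ 0 := by
    have h1 := real_inner_mul_inner_self_le bb d
    rw [real_inner_self_eq_norm_sq bb, real_inner_self_eq_norm_sq d, ← ht] at h1
    nlinarith [h1]
  set p := wedgeNorm a c with hp
  set q := wedgeNorm bb d with hq
  have hpsq : p ^ 2 = ‖a‖ ^ 2 * ‖c‖ ^ 2 - s ^ 2 := by
    rw [hp, wedgeNorm, ← hs]
    exact Real.sq_sqrt hCS1
  have hqsq : q ^ 2 = ‖bb‖ ^ 2 * ‖d‖ ^ 2 - t ^ 2 := by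
    rw [hq, wedgeNorm, ← ht]
    exact Real.sq_sqrt hCS2
  clear_value p q
  have h2pq : (1 - p ^ 2 - q ^ 2) ^ 2 = 4 * (p ^ 2 * q ^ 2) := by
    have h1 : 1 - p ^ 2 - q ^ 2 = 2 * (p * q) := by linear_combination (-(p + q + 1)) * heq
    rw [h1]; ring
  have ht' : t = -s := by linarith
  have hB : ‖bb‖ ^ 2 = 1 - ‖a‖ ^ 2 := by linarith
  have hD : ‖d‖ ^ 2 = 1 - ‖c‖ ^ 2 := by linarith
  rw [hpsq, hqsq, ht', hB, hD] at h2pq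
  have hkey : (‖a‖ ^ 2 - ‖c‖ ^ 2) ^ 2 + 4 * s ^ 2 = 0 := by linear_combination h2pq
  clear h2pq
  have hsq0 : s ^ 2 = 0 := by
    have h1 := sq_nonneg (‖a‖ ^ 2 - ‖c‖ ^ 2)
    have h2 := sq_nonneg s
    linarith
  have hs0 : s = 0 := pow_eq_zero_iff two_ne_zero |>.mp hsq0
  have hdiff0 : (‖a‖ ^ 2 - ‖c‖ ^ 2) ^ 2 = 0 := by
    have h2 := sq_nonneg s
    have h1 := sq_nonneg (‖a‖ ^ 2 - ‖c‖ ^ 2)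
    linarith
  have h2n : ‖a‖ ^ 2 = ‖c‖ ^ 2 := by
    have := sq_eq_zero_iff.mp hdiff0
    linarith
  have hAC : ‖c‖ = ‖a‖ := by
    have h := congrArg Real.sqrt h2n
    rw [Real.sqrt_sq (norm_nonneg a), Real.sqrt_sq (norm_nonneg c)] at h
    exact h.symm
  have ht0 : t = 0 := by rw [ht', hs0, neg_zero]
  have ha1 : ‖a‖ ≤ 1 := by nlinarith [norm_nonneg a, sq_nonneg (‖bb‖)]
  have hcos : Real.cos (Real.arccos ‖a‖) = ‖a‖ :=
    Real.cos_arccos (by linarith [norm_nonneg a]) ha1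
  have hsin : Real.sin (Real.arccos ‖a‖) = ‖bb‖ := by
    rw [Real.sin_arccos]
    have h9 : (1 : ℝ) - ‖a‖ ^ 2 = ‖bb‖ ^ 2 := by linarith
    rw [h9, Real.sqrt_sq (norm_nonneg bb)]
  have hd2 : ‖d‖ ^ 2 = ‖bb‖ ^ 2 := by linarith
  have hdb : ‖d‖ = ‖bb‖ := by
    have h := congrArg Real.sqrt hd2
    rwa [Real.sqrt_sq (norm_nonneg d), Real.sqrt_sq (norm_nonneg bb)] at h
  obtain ⟨v1, v2, hv1n, hv2n, hv1P, hv2P, hv12, hv1a, hv2c⟩ :=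
    aux_pair P1 (b 0) (b 1) a c (hON.1 0) (hON.1 1) hb0P hb1P (hON.2 (by decide))
      haP hcP (by rw [hcos]; exact norm_nonneg a) hcos.symm (hAC.trans hcos.symm)
      (by rw [← hs]; exact hs0)
  obtain ⟨u1, u2, hu1n, hu2n, hu1P, hu2P, hu12, hu1b, hu2d⟩ :=
    aux_pair P2 (b 2) (b 3) bb d (hON.1 2) (hON.1 3) hb2P hb3P (hON.2 (by decide))
      hxaP2 hycP2 (by rw [hsin]; exact norm_nonneg bb) hsin.symm (hdb.trans hsin.symm)
      (by rw [← ht]; exact ht0)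
  refine ⟨Real.arccos ‖a‖, ⟨Real.arccos_nonneg _, Real.arccos_le_pi_div_two.mpr (norm_nonneg a)⟩,
    v1, v2, u1, u2, hv1n, hv2n, hu1n, hu2n, hv1P, hv2P, hu1P, hu2P, hv12, hu12, ?_, ?_⟩
  · rw [hv1a, hu1b]; exact hxeq
  · rw [hv2c, hu2d]; exact hyeq
end

section
/- Let 0 ≤ α₁ ≤ α₂ ≤ π/2, and let P¹, P² ⊂ ℝ⁴ be two 2-dimensional planes with characteristic angles (α₁, α₂); concretely, in an orthonormal basis e₁,e₂,e₃,e₄, P¹ = span(e₁,e₂) and P² = span(cos α₁ e₁ + sin α₁ e₃, cos α₂ e₂ + sin α₂ e₄). Denote by p^i the orthogonal projection on P^i acting on 2-vectors. Then for every unit simple 2-vector ζ ∈ ∧₂ℝ⁴, |p¹ζ| + |p²ζ| ≤ 1 + 2 cos α₁. -/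
open Metric MeasureTheory Submodule Real
open scoped ENNReal NNReal

set_option maxHeartbeats 1000000

section helpers

variable {E : Type*} [NormedAddCommGroup E] [InnerProductSpace ℝ E] [FiniteDimensional ℝ E]

lemma proj_span_pair (u v x : E) (huu : (inner ℝ u u : ℝ) = 1) (hvv : (inner ℝ v v : ℝ) = 1)
    (huv : (inner ℝ u v : ℝ) = 0) :
    (orthogonalProjection (span ℝ {u, v}) x : E) = (inner ℝ u x : ℝ) • u + (inner ℝ v x : ℝ) • v := by
  have hvu : (inner ℝ v u : ℝ) = 0 := by rw [real_inner_comm]; exact huv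
  apply Submodule.eq_starProjection_of_mem_of_inner_eq_zero
  · exact add_mem (smul_mem _ _ (subset_span (by simp))) (smul_mem _ _ (subset_span (by simp)))
  · have ku : (inner ℝ (x - ((inner ℝ u x : ℝ) • u + (inner ℝ v x : ℝ) • v)) u : ℝ) = 0 := by
      simp [inner_sub_left, inner_add_left, real_inner_smul_left, huu, hvu,
        real_inner_comm x u, (by rw [← real_inner_self_eq_norm_sq]; exact huu : ‖u‖ ^ 2 = 1)]
    have kv : (inner ℝ (x - ((inner ℝ u x : ℝ) • u + (inner ℝ v x : ℝ) • v)) v : ℝ) = 0 := by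
      simp [inner_sub_left, inner_add_left, real_inner_smul_left, hvv, huv,
        real_inner_comm x v, (by rw [← real_inner_self_eq_norm_sq]; exact hvv : ‖v‖ ^ 2 = 1)]
    intro w hw
    induction hw using Submodule.span_induction with
    | mem w hw => rcases hw with rfl | rfl; exacts [ku, kv]
    | zero => simp
    | add a b _ _ ha hb => rw [inner_add_right, ha, hb]; ring
    | smul r a _ ha => rw [real_inner_smul_right, ha]; ring

omit [FiniteDimensional ℝ E] in
lemma wedge_pair (u v : E) (huu : (inner ℝ u u : ℝ) = 1) (hvv : (inner ℝ v v : ℝ) = 1)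
    (huv : (inner ℝ u v : ℝ) = 0) (p₀ p₁ q₀ q₁ : ℝ) :
    wedgeNorm (p₀ • u + p₁ • v) (q₀ • u + q₁ • v) = |p₀ * q₁ - p₁ * q₀| := by
  have hvu : (inner ℝ v u : ℝ) = 0 := by rw [real_inner_comm]; exact huv
  have h1 : ‖p₀ • u + p₁ • v‖ ^ 2 = p₀ ^ 2 + p₁ ^ 2 := by
    rw [← real_inner_self_eq_norm_sq]
    simp only [inner_add_left, inner_add_right, real_inner_smul_left, real_inner_smul_right,
      huu, hvv, huv, hvu]
    ring
  have h2 : ‖q₀ • u + q₁ • v‖ ^ 2 = q₀ ^ 2 + q₁ ^ 2 := by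
    rw [← real_inner_self_eq_norm_sq]
    simp only [inner_add_left, inner_add_right, real_inner_smul_left, real_inner_smul_right,
      huu, hvv, huv, hvu]
    ring
  have h3 : (inner ℝ (p₀ • u + p₁ • v) (q₀ • u + q₁ • v) : ℝ) = p₀ * q₀ + p₁ * q₁ := by
    simp only [inner_add_left, inner_add_right, real_inner_smul_left, real_inner_smul_right,
      huu, hvv, huv, hvu]
    ring
  rw [wedgeNorm, h1, h2, h3]
  rw [show (p₀ ^ 2 + p₁ ^ 2) * (q₀ ^ 2 + q₁ ^ 2) - (p₀ * q₀ + p₁ * q₁) ^ 2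
      = (p₀ * q₁ - p₁ * q₀) ^ 2 by ring, Real.sqrt_sq_eq_abs]

end helpers

lemma cauchy2 (u z w X Y : ℝ) : u*X + w*Y ≤ Real.sqrt ((u^2+z^2+w^2) * (X^2+Y^2)) := by
  have h : (u*X+w*Y)^2 ≤ (u^2+z^2+w^2)*(X^2+Y^2) := by
    nlinarith [sq_nonneg (u*Y - w*X), sq_nonneg z, sq_nonneg X, sq_nonneg Y]
  calc u*X + w*Y ≤ |u*X+w*Y| := le_abs_self _
    _ = Real.sqrt ((u*X+w*Y)^2) := (Real.sqrt_sq_eq_abs _).symm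
    _ ≤ _ := Real.sqrt_le_sqrt h

lemma sqrtsum (A B K : ℝ) (hA : 0 ≤ A) (hB : 0 ≤ B) (hK : 0 ≤ K)
    (h : A + B + 2*Real.sqrt (A*B) ≤ K^2) : Real.sqrt A + Real.sqrt B ≤ K := by
  have hAB : Real.sqrt (A*B) = Real.sqrt A * Real.sqrt B := Real.sqrt_mul hA B
  have h1 : (Real.sqrt A + Real.sqrt B)^2 = A + B + 2*Real.sqrt (A*B) := by
    rw [add_sq, Real.sq_sqrt hA, Real.sq_sqrt hB, hAB]; ring
  nlinarith [Real.sqrt_nonneg A, Real.sqrt_nonneg B]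

lemma half (a b c d e f c₁ s₁ c₂ s₂ s t : ℝ)
    (h1 : c₁^2+s₁^2 = 1) (h2 : c₂^2+s₂^2 = 1) (hs₁ : 0 ≤ s₁) (hs₂ : 0 ≤ s₂)
    (hc2 : 0 ≤ c₂) (hc12 : c₂ ≤ c₁)
    (hnorm : a^2+b^2+c^2+d^2+e^2+f^2 = 1) (hpl : a*b - e*f + c*d = 0)
    (hs : s = 1 ∨ s = -1) (ht : t = 1 ∨ t = -1) :
    s*a + t*(c₁*c₂*a + s₁*s₂*b + c₁*s₂*c - s₁*c₂*d) ≤ 1 + 2*c₁ := by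
  have hc1 : 0 ≤ c₁ := hc2.trans hc12
  have hc11 : c₁ ≤ 1 := by nlinarith [sq_nonneg s₁]
  have hplus : (a+b)^2+(e-f)^2+(c+d)^2 = 1 := by linear_combination hnorm + 2*hpl
  have hminus : (a-b)^2+(e+f)^2+(c-d)^2 = 1 := by linear_combination hnorm - 2*hpl
  have hC1 : (s + t*(c₁*c₂+s₁*s₂))^2 + (t*(c₁*s₂ - s₁*c₂))^2
      = 2 + 2*(s*t)*(c₁*c₂+s₁*s₂) := by
    rcases hs with rfl | rfl <;> rcases ht with rfl | rfl <;>
      linear_combination (c₂^2+s₂^2)*h1 + h2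
  have hD1 : (s + t*(c₁*c₂-s₁*s₂))^2 + (t*(c₁*s₂ + s₁*c₂))^2
      = 2 + 2*(s*t)*(c₁*c₂-s₁*s₂) := by
    rcases hs with rfl | rfl <;> rcases ht with rfl | rfl <;>
      linear_combination (c₂^2+s₂^2)*h1 + h2
  have E1 := cauchy2 (a+b) (e-f) (c+d) (s + t*(c₁*c₂+s₁*s₂)) (t*(c₁*s₂ - s₁*c₂))
  rw [hplus, hC1, one_mul] at E1
  have E2 := cauchy2 (a-b) (e+f) (c-d) (s + t*(c₁*c₂-s₁*s₂)) (t*(c₁*s₂ + s₁*c₂))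
  rw [hminus, hD1, one_mul] at E2
  have I1 : s*a + t*(c₁*c₂*a + s₁*s₂*b + c₁*s₂*c - s₁*c₂*d)
      = ((a+b)*(s + t*(c₁*c₂+s₁*s₂)) + (c+d)*(t*(c₁*s₂ - s₁*c₂)))/2
        + ((a-b)*(s + t*(c₁*c₂-s₁*s₂)) + (c-d)*(t*(c₁*s₂ + s₁*c₂)))/2 := by ring
  have key : s*a + t*(c₁*c₂*a + s₁*s₂*b + c₁*s₂*c - s₁*c₂*d)
      ≤ (Real.sqrt (2 + 2*(s*t)*(c₁*c₂+s₁*s₂)) + Real.sqrt (2 + 2*(s*t)*(c₁*c₂-s₁*s₂)))/2 := by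
    rw [I1]; linarith only [E1, E2]
  have hst : s*t = 1 ∨ s*t = -1 := by
    rcases hs with rfl | rfl <;> rcases ht with rfl | rfl <;> norm_num
  have hCn : (0:ℝ) ≤ c₁*c₂+s₁*s₂ := by positivity
  have hDlb : (-1:ℝ) ≤ c₁*c₂-s₁*s₂ := by nlinarith [sq_nonneg (c₁+c₂), sq_nonneg (s₁-s₂)]
  have hCub : c₁*c₂+s₁*s₂ ≤ 1 := by nlinarith [sq_nonneg (c₁-c₂), sq_nonneg (s₁-s₂)]
  have hDub : c₁*c₂-s₁*s₂ ≤ 1 := by nlinarith [sq_nonneg (c₁-c₂), sq_nonneg (s₁+s₂)]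
  rcases hst with hst | hst
  · rw [hst] at key
    have bnd : Real.sqrt (2 + 2*1*(c₁*c₂+s₁*s₂)) + Real.sqrt (2 + 2*1*(c₁*c₂-s₁*s₂))
        ≤ 2*(1 + 2*c₁) := by
      apply sqrtsum _ _ _ (by linarith) (by linarith) (by linarith)
      have hprod : (2 + 2*1*(c₁*c₂+s₁*s₂)) * (2 + 2*1*(c₁*c₂-s₁*s₂)) = (2*(c₁+c₂))^2 := by
        linear_combination (-(4*s₂^2))*h1 + (4*c₁^2 - 4)*h2
      rw [hprod, Real.sqrt_sq (by linarith)]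
      nlinarith [mul_nonneg (sub_nonneg.2 hc12) (by linarith : (0:ℝ) ≤ 4*c₁+4),
        mul_nonneg hc1 hc1]
    ring_nf at key bnd; linarith only [key, bnd]
  · rw [hst] at key
    have bnd : Real.sqrt (2 + 2*(-1)*(c₁*c₂+s₁*s₂)) + Real.sqrt (2 + 2*(-1)*(c₁*c₂-s₁*s₂))
        ≤ 2*(1 + 2*c₁) := by
      apply sqrtsum _ _ _ (by linarith) (by linarith) (by linarith)
      have hprod : (2 + 2*(-1)*(c₁*c₂+s₁*s₂)) * (2 + 2*(-1)*(c₁*c₂-s₁*s₂))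
          = (2*(c₁-c₂))^2 := by
        linear_combination (-(4*s₂^2))*h1 + (4*c₁^2 - 4)*h2
      rw [hprod, Real.sqrt_sq (by linarith)]
      nlinarith [mul_nonneg hc1 hc2, mul_nonneg hc1 hc1]
    ring_nf at key bnd; linarith only [key, bnd]

lemma alg (a b c d e f c₁ s₁ c₂ s₂ : ℝ)
    (h1 : c₁^2+s₁^2 = 1) (h2 : c₂^2+s₂^2 = 1) (hs₁ : 0 ≤ s₁) (hs₂ : 0 ≤ s₂)
    (hc2 : 0 ≤ c₂) (hc12 : c₂ ≤ c₁)
    (hnorm : a^2+b^2+c^2+d^2+e^2+f^2 = 1) (hpl : a*b - e*f + c*d = 0) :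
    |a| + |c₁*c₂*a + s₁*s₂*b + c₁*s₂*c - s₁*c₂*d| ≤ 1 + 2*c₁ := by
  have h11 := half a b c d e f c₁ s₁ c₂ s₂ 1 1 h1 h2 hs₁ hs₂ hc2 hc12 hnorm hpl
    (Or.inl rfl) (Or.inl rfl)
  have h1m := half a b c d e f c₁ s₁ c₂ s₂ 1 (-1) h1 h2 hs₁ hs₂ hc2 hc12 hnorm hpl
    (Or.inl rfl) (Or.inr rfl)
  have hm1 := half a b c d e f c₁ s₁ c₂ s₂ (-1) 1 h1 h2 hs₁ hs₂ hc2 hc12 hnorm hpl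
    (Or.inr rfl) (Or.inl rfl)
  have hmm := half a b c d e f c₁ s₁ c₂ s₂ (-1) (-1) h1 h2 hs₁ hs₂ hc2 hc12 hnorm hpl
    (Or.inr rfl) (Or.inr rfl)
  rcases abs_cases a with ⟨ha, _⟩ | ⟨ha, _⟩ <;>
    rcases abs_cases (c₁*c₂*a + s₁*s₂*b + c₁*s₂*c - s₁*c₂*d) with ⟨hB, _⟩ | ⟨hB, _⟩ <;>
      rw [ha, hB] <;> linarith

/-- If `P¹, P²` are two 2-planes in `ℝ⁴` with characteristic angles `(α₁, α₂)`,
`0 ≤ α₁ ≤ α₂ ≤ π/2`, i.e. in an orthonormal basis `e₁,…,e₄`, `P¹ = span(e₁,e₂)` and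
`P² = span(cos α₁ e₁ + sin α₁ e₃, cos α₂ e₂ + sin α₂ e₄)`, then for every unit simple
2-vector `ζ = x ∧ y`, `|p¹ζ| + |p²ζ| ≤ 1 + 2 cos α₁`. -/
theorem sum_proj_le_of_characteristic_angles
    (α₁ α₂ : ℝ) (h0 : 0 ≤ α₁) (h12 : α₁ ≤ α₂) (h2 : α₂ ≤ π / 2)
    (b : OrthonormalBasis (Fin 4) ℝ (EuclideanSpace ℝ (Fin 4)))
    (P1 P2 : Submodule ℝ (EuclideanSpace ℝ (Fin 4)))
    (hP1 : P1 = Submodule.span ℝ {b 0, b 1})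
    (hP2 : P2 = Submodule.span ℝ
      {Real.cos α₁ • b 0 + Real.sin α₁ • b 2, Real.cos α₂ • b 1 + Real.sin α₂ • b 3})
    (x y : EuclideanSpace ℝ (Fin 4))
    (hx : ‖x‖ = 1) (hy : ‖y‖ = 1) (hxy : (inner ℝ x y : ℝ) = 0) :
    wedgeNorm ((orthogonalProjection P1 x : EuclideanSpace ℝ (Fin 4)))
        ((orthogonalProjection P1 y : EuclideanSpace ℝ (Fin 4)))
      + wedgeNorm ((orthogonalProjection P2 x : EuclideanSpace ℝ (Fin 4)))
        ((orthogonalProjection P2 y : EuclideanSpace ℝ (Fin 4)))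
      ≤ 1 + 2 * Real.cos α₁ := by
  subst hP1 hP2
  have hb : ∀ i j, (inner ℝ (b i) (b j) : ℝ) = if i = j then 1 else 0 :=
    orthonormal_iff_ite.mp b.orthonormal
  have hpi := Real.pi_pos
  -- trig facts
  have h1 : Real.cos α₁ ^ 2 + Real.sin α₁ ^ 2 = 1 := Real.cos_sq_add_sin_sq α₁
  have h2' : Real.cos α₂ ^ 2 + Real.sin α₂ ^ 2 = 1 := Real.cos_sq_add_sin_sq α₂
  have hs1 : 0 ≤ Real.sin α₁ := Real.sin_nonneg_of_nonneg_of_le_pi h0 (by linarith)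
  have hs2 : 0 ≤ Real.sin α₂ :=
    Real.sin_nonneg_of_nonneg_of_le_pi (h0.trans h12) (by linarith)
  have hc2n : 0 ≤ Real.cos α₂ := Real.cos_nonneg_of_mem_Icc ⟨by linarith, h2⟩
  have hc12 : Real.cos α₂ ≤ Real.cos α₁ :=
    Real.cos_le_cos_of_nonneg_of_le_pi h0 (by linarith) h12
  -- inner ℝ products of basis vectors
  have hb00 : (inner ℝ (b 0) (b 0) : ℝ) = 1 := by simp [hb]
  have hb11 : (inner ℝ (b 1) (b 1) : ℝ) = 1 := by simp [hb]
  have hb01 : (inner ℝ (b 0) (b 1) : ℝ) = 0 := by simp [hb]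
  -- the orthonormal pair spanning P2
  set u2 : EuclideanSpace ℝ (Fin 4) := Real.cos α₁ • b 0 + Real.sin α₁ • b 2 with hu2
  set v2 : EuclideanSpace ℝ (Fin 4) := Real.cos α₂ • b 1 + Real.sin α₂ • b 3 with hv2
  have huu : (inner ℝ u2 u2 : ℝ) = 1 := by
    rw [hu2]
    simp only [inner_add_left, inner_add_right, real_inner_smul_left, real_inner_smul_right, hb]
    norm_num [(by decide : (2:Fin 4) ≠ 0), (by decide : (0:Fin 4) ≠ 2), (by decide : (3:Fin 4) ≠ 1), (by decide : (1:Fin 4) ≠ 3), (by decide : (0:Fin 4) ≠ 1), (by decide : (0:Fin 4) ≠ 3), (by decide : (2:Fin 4) ≠ 1), (by decide : (2:Fin 4) ≠ 3)]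
    linear_combination h1
  have hvv : (inner ℝ v2 v2 : ℝ) = 1 := by
    rw [hv2]
    simp only [inner_add_left, inner_add_right, real_inner_smul_left, real_inner_smul_right, hb]
    norm_num [(by decide : (2:Fin 4) ≠ 0), (by decide : (0:Fin 4) ≠ 2), (by decide : (3:Fin 4) ≠ 1), (by decide : (1:Fin 4) ≠ 3), (by decide : (0:Fin 4) ≠ 1), (by decide : (0:Fin 4) ≠ 3), (by decide : (2:Fin 4) ≠ 1), (by decide : (2:Fin 4) ≠ 3)]
    linear_combination h2'
  have huv : (inner ℝ u2 v2 : ℝ) = 0 := by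
    rw [hu2, hv2]
    simp only [inner_add_left, inner_add_right, real_inner_smul_left, real_inner_smul_right, hb]
    norm_num [(by decide : (2:Fin 4) ≠ 0), (by decide : (0:Fin 4) ≠ 2), (by decide : (3:Fin 4) ≠ 1), (by decide : (1:Fin 4) ≠ 3), (by decide : (0:Fin 4) ≠ 1), (by decide : (0:Fin 4) ≠ 3), (by decide : (2:Fin 4) ≠ 1), (by decide : (2:Fin 4) ≠ 3)]
  -- rewrite the projections
  rw [proj_span_pair (b 0) (b 1) x hb00 hb11 hb01, proj_span_pair (b 0) (b 1) y hb00 hb11 hb01,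
    proj_span_pair u2 v2 x huu hvv huv, proj_span_pair u2 v2 y huu hvv huv,
    wedge_pair (b 0) (b 1) hb00 hb11 hb01, wedge_pair u2 v2 huu hvv huv]
  -- expand inner ℝ products with u2, v2
  have hiux : (inner ℝ u2 x : ℝ)
      = Real.cos α₁ * (inner ℝ (b 0) x : ℝ) + Real.sin α₁ * (inner ℝ (b 2) x : ℝ) := by
    rw [hu2]; simp only [inner_add_left, real_inner_smul_left]
  have hiuy : (inner ℝ u2 y : ℝ)
      = Real.cos α₁ * (inner ℝ (b 0) y : ℝ) + Real.sin α₁ * (inner ℝ (b 2) y : ℝ) := by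
    rw [hu2]; simp only [inner_add_left, real_inner_smul_left]
  have hivx : (inner ℝ v2 x : ℝ)
      = Real.cos α₂ * (inner ℝ (b 1) x : ℝ) + Real.sin α₂ * (inner ℝ (b 3) x : ℝ) := by
    rw [hv2]; simp only [inner_add_left, real_inner_smul_left]
  have hivy : (inner ℝ v2 y : ℝ)
      = Real.cos α₂ * (inner ℝ (b 1) y : ℝ) + Real.sin α₂ * (inner ℝ (b 3) y : ℝ) := by
    rw [hv2]; simp only [inner_add_left, real_inner_smul_left]
  rw [hiux, hiuy, hivx, hivy]
  -- Parseval-type identities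
  have hsum : ∀ z w : EuclideanSpace ℝ (Fin 4), (inner ℝ z w : ℝ)
      = (inner ℝ (b 0) z : ℝ) * (inner ℝ (b 0) w : ℝ) + (inner ℝ (b 1) z : ℝ) * (inner ℝ (b 1) w : ℝ)
        + (inner ℝ (b 2) z : ℝ) * (inner ℝ (b 2) w : ℝ)
        + (inner ℝ (b 3) z : ℝ) * (inner ℝ (b 3) w : ℝ) := by
    intro z w
    have h := b.sum_inner_mul_inner z w
    rw [Fin.sum_univ_four] at h
    rw [← h, real_inner_comm z (b 0), real_inner_comm z (b 1), real_inner_comm z (b 2),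
      real_inner_comm z (b 3)]
  have hXX := hsum x x
  rw [real_inner_self_eq_norm_sq, hx] at hXX
  have hYY := hsum y y
  rw [real_inner_self_eq_norm_sq, hy] at hYY
  have hO := hsum x y
  rw [hxy] at hO
  -- abbreviations
  set p0 : ℝ := inner ℝ (b 0) x
  set p1 : ℝ := inner ℝ (b 1) x
  set p2 : ℝ := inner ℝ (b 2) x
  set p3 : ℝ := inner ℝ (b 3) x
  set q0 : ℝ := inner ℝ (b 0) y
  set q1 : ℝ := inner ℝ (b 1) y
  set q2 : ℝ := inner ℝ (b 2) y
  set q3 : ℝ := inner ℝ (b 3) y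
  have hXX' : p0*p0 + p1*p1 + p2*p2 + p3*p3 = 1 := by linear_combination -hXX
  have hYY' : q0*q0 + q1*q1 + q2*q2 + q3*q3 = 1 := by linear_combination -hYY
  have hO' : p0*q0 + p1*q1 + p2*q2 + p3*q3 = 0 := by linear_combination -hO
  have hnorm : (p0*q1 - p1*q0)^2 + (p2*q3 - p3*q2)^2 + (p0*q3 - p3*q0)^2
      + (p1*q2 - p2*q1)^2 + (p0*q2 - p2*q0)^2 + (p1*q3 - p3*q1)^2 = 1 := by
    linear_combination (q0*q0 + q1*q1 + q2*q2 + q3*q3) * hXX' + hYY'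
      - (p0*q0 + p1*q1 + p2*q2 + p3*q3) * hO'
  have hpl : (p0*q1 - p1*q0)*(p2*q3 - p3*q2) - (p0*q2 - p2*q0)*(p1*q3 - p3*q1)
      + (p0*q3 - p3*q0)*(p1*q2 - p2*q1) = 0 := by ring
  have main := alg (p0*q1 - p1*q0) (p2*q3 - p3*q2) (p0*q3 - p3*q0) (p1*q2 - p2*q1)
    (p0*q2 - p2*q0) (p1*q3 - p3*q1) (Real.cos α₁) (Real.sin α₁) (Real.cos α₂) (Real.sin α₂)
    h1 h2' hs1 hs2 hc2n hc12 hnorm hpl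
  have e2 : (Real.cos α₁ * p0 + Real.sin α₁ * p2) * (Real.cos α₂ * q1 + Real.sin α₂ * q3)
      - (Real.cos α₂ * p1 + Real.sin α₂ * p3) * (Real.cos α₁ * q0 + Real.sin α₁ * q2)
      = Real.cos α₁ * Real.cos α₂ * (p0*q1 - p1*q0) + Real.sin α₁ * Real.sin α₂ * (p2*q3 - p3*q2)
        + Real.cos α₁ * Real.sin α₂ * (p0*q3 - p3*q0)
        - Real.sin α₁ * Real.cos α₂ * (p1*q2 - p2*q1) := by ring
  rw [e2]
  exact main
end

section
/- Let P be a 2-dimensional plane through the origin in ℝ⁴, p the orthogonal projection on P, and φ : ℝ⁴ → ℝ⁴ a Lipschitz (in particular continuous) map such that φ(x) = x for all x ∈ P with ‖x‖ ≥ 1. Then p(φ(P ∩ closedBall(0,1))) ⊇ P ∩ closedBall(0,1). -/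
open Metric Submodule
open scoped NNReal
open Set Complex

lemma ratio_mem_slitPlane {u w : ℂ} (h : ‖u - w‖ < ‖w‖) : u / w ∈ Complex.slitPlane := by
  have hw : w ≠ 0 := by
    rintro rfl
    simp only [norm_zero, sub_zero] at h
    exact (norm_nonneg u).not_gt h
  apply Complex.ball_one_subset_slitPlane
  rw [mem_ball, dist_eq_norm]
  have h2 : u / w - 1 = (u - w) / w := by field_simp
  rw [h2, norm_div]
  exact div_lt_one (norm_pos_iff.mpr hw) |>.mpr h

lemma lift_diff_eq {Λ₁ Λ₂ : ℝ → ℂ}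
    (h1c : ContinuousOn Λ₁ (Icc 0 1)) (h2c : ContinuousOn Λ₂ (Icc 0 1))
    (heq : ∀ t ∈ Icc (0:ℝ) 1, Complex.exp (Λ₁ t) = Complex.exp (Λ₂ t)) :
    Λ₁ 1 - Λ₁ 0 = Λ₂ 1 - Λ₂ 0 := by
  have hψc : ContinuousOn (fun t => (Λ₁ t - Λ₂ t).im) (Icc 0 1) :=
    Complex.continuous_im.comp_continuousOn (h1c.sub h2c)
  have key : ∀ t ∈ Icc (0:ℝ) 1, ∃ n : ℤ, (Λ₁ t - Λ₂ t).im = n * (2 * Real.pi) ∧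
      Λ₁ t - Λ₂ t = ((Λ₁ t - Λ₂ t).im : ℂ) * Complex.I := by
    intro t ht
    have h1 : Complex.exp (Λ₁ t - Λ₂ t) = 1 := by
      rw [Complex.exp_sub, heq t ht, div_self (Complex.exp_ne_zero _)]
    obtain ⟨n, hn⟩ := Complex.exp_eq_one_iff.mp h1
    have him2 : ((n:ℂ) * (2 * (Real.pi:ℂ) * Complex.I)).im = (n:ℝ) * (2 * Real.pi) := by
      simp [Complex.mul_im]
    have him : (Λ₁ t - Λ₂ t).im = n * (2 * Real.pi) := by rw [hn, him2]
    refine ⟨n, him, ?_⟩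
    rw [hn, him2]
    push_cast
    ring
  have h0m : (0:ℝ) ∈ Icc (0:ℝ) 1 := by norm_num
  have h1m : (1:ℝ) ∈ Icc (0:ℝ) 1 := by norm_num
  obtain ⟨n₀, hn₀, hd₀⟩ := key 0 h0m
  obtain ⟨n₁, hn₁, hd₁⟩ := key 1 h1m
  have hpi := Real.pi_pos
  have parity : ∀ a : ℤ, ∀ t ∈ Icc (0:ℝ) 1,
      (Λ₁ t - Λ₂ t).im ≠ (2*a+1) * Real.pi := by
    intro a t ht hcontra
    obtain ⟨nt, hnt, -⟩ := key t ht
    rw [hnt] at hcontra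
    have : (2*(a:ℝ)+1) = 2*nt := by
      have hπ := Real.pi_ne_zero
      have : ((2*(a:ℝ)+1) - 2*nt) * Real.pi = 0 := by linarith
      rcases mul_eq_zero.mp this with h | h
      · linarith
      · exact absurd h hπ
    have : 2*a+1 = 2*nt := by exact_mod_cast this
    omega
  have hmain : (Λ₁ 0 - Λ₂ 0).im = (Λ₁ 1 - Λ₂ 1).im := by
    rcases lt_trichotomy ((Λ₁ 0 - Λ₂ 0).im) ((Λ₁ 1 - Λ₂ 1).im) with h | h | h
    · exfalso
      have hn : n₀ < n₁ := by
        rw [hn₀, hn₁] at h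
        have : (n₀:ℝ) < n₁ := by nlinarith
        exact_mod_cast this
      have hcast : (n₀:ℝ) + 1 ≤ n₁ := by exact_mod_cast hn
      have hc : ((2*n₀+1) * Real.pi) ∈ Icc ((Λ₁ 0 - Λ₂ 0).im) ((Λ₁ 1 - Λ₂ 1).im) := by
        constructor
        · rw [hn₀]; nlinarith
        · rw [hn₁]; nlinarith
      obtain ⟨t, ht, hψt⟩ := intermediate_value_Icc zero_le_one hψc hc
      exact parity n₀ t ht hψt
    · exact h
    · exfalso
      have hn : n₁ < n₀ := by
        rw [hn₀, hn₁] at h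
        have : (n₁:ℝ) < n₀ := by nlinarith
        exact_mod_cast this
      have hcast : (n₁:ℝ) + 1 ≤ n₀ := by exact_mod_cast hn
      have hc : ((2*n₁+1) * Real.pi) ∈ Icc ((Λ₁ 1 - Λ₂ 1).im) ((Λ₁ 0 - Λ₂ 0).im) := by
        constructor
        · rw [hn₁]; nlinarith
        · rw [hn₀]; nlinarith
      obtain ⟨t, ht, hψt⟩ := intermediate_value_Icc' zero_le_one hψc hc
      exact parity n₁ t ht hψt
  have hfin : Λ₁ 1 - Λ₂ 1 = Λ₁ 0 - Λ₂ 0 := by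
    rw [hd₀, hd₁, hmain]
  linear_combination hfin

lemma exists_lift {γ : ℝ → ℂ} (hc : Continuous γ) (h0 : ∀ t, γ t ≠ 0)
    {m δ : ℝ} (hm : 0 < m) (hmle : ∀ t, m ≤ ‖γ t‖) (hδ : 0 < δ)
    (hosc : ∀ s t : ℝ, |s - t| ≤ δ → ‖γ s - γ t‖ < m)
    (hlow : ∀ t ≤ (0:ℝ), γ t = γ 0) :
    ∃ Λ : ℝ → ℂ, Continuous Λ ∧ ∀ t ∈ Icc (0:ℝ) 1, Complex.exp (Λ t) = γ t := by
  have claim : ∀ k : ℕ, ∃ Λ : ℝ → ℂ, Continuous Λ ∧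
      ∀ t ≤ (k:ℝ) * δ, Complex.exp (Λ t) = γ t := by
    intro k
    induction k with
    | zero =>
      refine ⟨fun _ => Complex.log (γ 0), continuous_const, ?_⟩
      intro t ht
      simp only [Nat.cast_zero, zero_mul] at ht
      rw [hlow t ht, Complex.exp_log (h0 0)]
    | succ k ih =>
      obtain ⟨Λ, hΛc, hΛ⟩ := ih
      set a : ℝ := (k:ℝ) * δ with ha
      set b : ℝ := ((k:ℕ)+1:ℝ) * δ with hb
      have hab : a ≤ b := by
        rw [ha, hb]; nlinarith
      set v : ℝ → ℝ := fun t => max a (min t b) with hv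
      have hva : ∀ t, a ≤ v t := fun t => le_max_left _ _
      have hvb : ∀ t, v t ≤ b := fun t => max_le hab (min_le_right _ _)
      have hvd : ∀ t, |v t - a| ≤ δ := by
        intro t
        rw [abs_sub_le_iff]
        constructor
        · have hba : b - a = δ := by rw [ha, hb]; ring
          linarith [hvb t]
        · linarith [hva t]
      have hvnear : ∀ t, ‖γ (v t) - γ a‖ < m := fun t => hosc _ _ (hvd t)
      have hslit : ∀ t, γ (v t) / γ a ∈ Complex.slitPlane := fun t =>
        ratio_mem_slitPlane (lt_of_lt_of_le (hvnear t) (hmle a))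
      have hvc : Continuous v := continuous_const.max (continuous_id.min continuous_const)
      have hgc : Continuous fun t => Λ a + Complex.log (γ (v t) / γ a) := by
        refine continuous_const.add ?_
        have hrat : Continuous fun t => γ (v t) / γ a := (hc.comp hvc).div_const _
        exact hrat.clog fun t => hslit t
      refine ⟨fun t => if t ≤ a then Λ t else Λ a + Complex.log (γ (v t) / γ a),
        Continuous.if_le hΛc hgc continuous_id continuous_const ?_, ?_⟩
      · intro t htEq
        have hva2 : v a = a := by
          show a ⊔ a ⊓ b = a
          rw [min_eq_left hab, max_self]
        rw [htEq, hva2, div_self (h0 a), Complex.log_one, add_zero]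
      · intro t ht
        by_cases hta : t ≤ a
        · simpa [hta] using hΛ t hta
        · push_neg at hta
          have htb : t ≤ b := by rw [hb]; push_cast at ht ⊢; linarith
          have hvt : v t = t := by
            show a ⊔ t ⊓ b = t
            rw [min_eq_left htb, max_eq_right hta.le]
          simp only [if_neg (not_le.mpr hta)]
          rw [Complex.exp_add, Complex.exp_log (div_ne_zero (h0 _) (h0 _)), hΛ a le_rfl, hvt]
          rw [mul_div_assoc'] ; exact mul_div_cancel_left₀ _ (h0 a)
  obtain ⟨k, hk⟩ := exists_nat_ge (1/δ)
  have hk1 : (1:ℝ) ≤ (k:ℝ) * δ := by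
    rw [div_le_iff₀ hδ] at hk
    linarith
  obtain ⟨Λ, hΛc, hΛ⟩ := claim k
  exact ⟨Λ, hΛc, fun t ht => hΛ t (ht.2.trans hk1)⟩

lemma wind_congr {γ₁ γ₂ Λ₁ Λ₂ : ℝ → ℂ}
    (hΛ₁c : ContinuousOn Λ₁ (Icc 0 1)) (hΛ₂c : ContinuousOn Λ₂ (Icc 0 1))
    (hΛ₁ : ∀ t ∈ Icc (0:ℝ) 1, Complex.exp (Λ₁ t) = γ₁ t)
    (hΛ₂ : ∀ t ∈ Icc (0:ℝ) 1, Complex.exp (Λ₂ t) = γ₂ t)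
    (hnear : ∀ t ∈ Icc (0:ℝ) 1, ‖γ₂ t - γ₁ t‖ < ‖γ₁ t‖)
    (hl₁ : γ₁ 0 = γ₁ 1) (hl₂ : γ₂ 0 = γ₂ 1) :
    Λ₂ 1 - Λ₂ 0 = Λ₁ 1 - Λ₁ 0 := by
  have h0m : (0:ℝ) ∈ Icc (0:ℝ) 1 := by norm_num
  have h1m : (1:ℝ) ∈ Icc (0:ℝ) 1 := by norm_num
  have hγ₁c : ContinuousOn γ₁ (Icc 0 1) :=
    (Complex.continuous_exp.comp_continuousOn hΛ₁c).congr fun t ht => (hΛ₁ t ht).symm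
  have hγ₂c : ContinuousOn γ₂ (Icc 0 1) :=
    (Complex.continuous_exp.comp_continuousOn hΛ₂c).congr fun t ht => (hΛ₂ t ht).symm
  have hγ₁0 : ∀ t ∈ Icc (0:ℝ) 1, γ₁ t ≠ 0 := fun t ht =>
    (hΛ₁ t ht) ▸ Complex.exp_ne_zero _
  have hslit : ∀ t ∈ Icc (0:ℝ) 1, γ₂ t / γ₁ t ∈ Complex.slitPlane := fun t ht =>
    ratio_mem_slitPlane (hnear t ht)
  set L : ℝ → ℂ := fun t => Λ₁ t + Complex.log (γ₂ t / γ₁ t) with hL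
  have hLc : ContinuousOn L (Icc 0 1) := by
    refine hΛ₁c.add ?_
    exact ContinuousOn.clog (hγ₂c.div hγ₁c hγ₁0) hslit
  have hLlift : ∀ t ∈ Icc (0:ℝ) 1, Complex.exp (L t) = γ₂ t := by
    intro t ht
    have hr0 : γ₂ t / γ₁ t ≠ 0 := Complex.slitPlane_ne_zero (hslit t ht)
    have hγ₂0 : γ₂ t ≠ 0 := fun h => by simp [h] at hr0
    rw [hL]
    show Complex.exp (Λ₁ t + Complex.log (γ₂ t / γ₁ t)) = γ₂ t
    rw [Complex.exp_add, Complex.exp_log hr0, hΛ₁ t ht, mul_div_assoc',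
      mul_div_cancel_left₀ _ (hγ₁0 t ht)]
  have h1 : Λ₂ 1 - Λ₂ 0 = L 1 - L 0 := by
    refine lift_diff_eq hΛ₂c hLc fun t ht => ?_
    rw [hΛ₂ t ht, hLlift t ht]
  rw [h1, hL]
  show Λ₁ 1 + Complex.log (γ₂ 1 / γ₁ 1) - (Λ₁ 0 + Complex.log (γ₂ 0 / γ₁ 0)) = Λ₁ 1 - Λ₁ 0
  rw [hl₁, hl₂]
  ring

noncomputable section

/-- clamp to [0,1] -/
def cl (t : ℝ) : ℝ := max 0 (min 1 t)

lemma cl_mem (t : ℝ) : cl t ∈ Icc (0:ℝ) 1 := by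
  constructor
  · exact le_max_left _ _
  · exact max_le zero_le_one (min_le_left _ _)

lemma cl_of_mem {t : ℝ} (h : t ∈ Icc (0:ℝ) 1) : cl t = t := by
  rw [cl, min_eq_right h.2, max_eq_right h.1]

lemma cl_zero : cl 0 = 0 := cl_of_mem (by norm_num)
lemma cl_one : cl 1 = 1 := cl_of_mem (by norm_num)

lemma cl_nonpos {t : ℝ} (h : t ≤ 0) : cl t = 0 := by
  rw [cl, max_eq_left]
  exact (min_le_right _ _).trans h

lemma cl_eq_projIcc (t : ℝ) : cl t = (projIcc (0:ℝ) 1 zero_le_one t : ℝ) := by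
  rw [coe_projIcc]; rfl

lemma cl_lipschitz (s t : ℝ) : |cl s - cl t| ≤ |s - t| := by
  rw [← Real.dist_eq, ← Real.dist_eq, cl_eq_projIcc, cl_eq_projIcc]
  have h := (LipschitzWith.projIcc (a := (0:ℝ)) (b := 1) zero_le_one).dist_le_mul s t
  rw [NNReal.coe_one, one_mul, Subtype.dist_eq] at h
  exact h

lemma cl_continuous : Continuous cl := continuous_const.max (continuous_const.min continuous_id)

/-- The standard parametrization of the circle, clamped. -/
def EE (t : ℝ) : ℂ := Complex.exp (((2 * Real.pi * cl t : ℝ) : ℂ) * Complex.I)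

lemma EE_norm (t : ℝ) : ‖EE t‖ = 1 := by
  rw [EE, Complex.norm_exp_ofReal_mul_I]

lemma EE_zero : EE 0 = 1 := by
  rw [EE, cl_zero]
  norm_num

lemma EE_one : EE 1 = 1 := by
  rw [EE, cl_one]
  push_cast
  rw [mul_one, Complex.exp_two_pi_mul_I]

lemma EE_continuous : Continuous EE :=
  Complex.continuous_exp.comp ((Complex.continuous_ofReal.comp
    (continuous_const.mul cl_continuous)).mul continuous_const)

lemma cl_idem (t : ℝ) : cl (cl t) = cl t := cl_of_mem (cl_mem t)

lemma EE_uniformContinuous : UniformContinuous EE := by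
  have h : EE = (fun x : Icc (0:ℝ) 1 => EE (x : ℝ)) ∘ (projIcc (0:ℝ) 1 zero_le_one) := by
    funext t
    show EE t = EE ((projIcc (0:ℝ) 1 zero_le_one t : ℝ))
    rw [← cl_eq_projIcc, EE, EE, cl_idem]
  rw [h]
  exact (CompactSpace.uniformContinuous_of_continuous
    (EE_continuous.comp continuous_subtype_val)).comp
    (LipschitzWith.projIcc zero_le_one).uniformContinuous


lemma no_retraction {f : ℂ → ℂ} (hf : Continuous f)
    (hb : ∀ z : ℂ, ‖z‖ = 1 → f z = z) {y₀ : ℂ} (hy : ‖y₀‖ < 1)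
    (hne : ∀ z ∈ closedBall (0:ℂ) 1, f z ≠ y₀) : False := by
  set F : ℂ → ℂ := fun z => f z - y₀ with hF
  have hFc : Continuous F := hf.sub continuous_const
  have hF0 : ∀ z ∈ closedBall (0:ℂ) 1, F z ≠ 0 := fun z hz => sub_ne_zero.mpr (hne z hz)
  -- minimum of ‖F‖ on the closed ball
  obtain ⟨z₀, hz₀B, hz₀min⟩ := (isCompact_closedBall (0:ℂ) 1).exists_isMinOn
    ⟨0, mem_closedBall_self zero_le_one⟩ (hFc.norm.continuousOn)
  set m : ℝ := ‖F z₀‖ with hm'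
  have hm : 0 < m := norm_pos_iff.mpr (hF0 z₀ hz₀B)
  have hmle : ∀ z ∈ closedBall (0:ℂ) 1, m ≤ ‖F z‖ := fun z hz => isMinOn_iff.mp hz₀min z hz
  -- uniform continuity of F on the ball
  have hFuc : UniformContinuousOn F (closedBall (0:ℂ) 1) :=
    (isCompact_closedBall (0:ℂ) 1).uniformContinuousOn_of_continuous hFc.continuousOn
  rw [Metric.uniformContinuousOn_iff] at hFuc
  obtain ⟨δF, hδF, hFδ⟩ := hFuc m hm
  -- uniform continuity of EE
  have hEuc := EE_uniformContinuous
  rw [Metric.uniformContinuous_iff] at hEuc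
  obtain ⟨δE, hδE, hEδ⟩ := hEuc δF hδF
  -- the family of loops
  set γ : ℝ → ℝ → ℂ := fun s t => F (((cl s : ℝ) : ℂ) * EE t) with hγ
  have hmemB : ∀ s t : ℝ, ((cl s : ℝ) : ℂ) * EE t ∈ closedBall (0:ℂ) 1 := by
    intro s t
    rw [mem_closedBall_zero_iff, norm_mul, EE_norm, mul_one, Complex.norm_real,
      Real.norm_eq_abs, _root_.abs_of_nonneg (cl_mem s).1]
    exact (cl_mem s).2
  have hγc : ∀ s, Continuous (γ s) :=
    fun s => hFc.comp (continuous_const.mul EE_continuous)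
  have hγ0 : ∀ s t, γ s t ≠ 0 := fun s t => hF0 _ (hmemB s t)
  have hγm : ∀ s t, m ≤ ‖γ s t‖ := fun s t => hmle _ (hmemB s t)
  have hlow : ∀ s, ∀ t ≤ (0:ℝ), γ s t = γ s 0 := by
    intro s t ht
    have : EE t = EE 0 := by rw [EE, EE, cl_nonpos ht, cl_zero]
    rw [hγ]
    simp only [this]
  have hloop : ∀ s, γ s 0 = γ s 1 := by
    intro s
    have : EE 0 = EE 1 := by rw [EE_zero, EE_one]
    rw [hγ]
    simp only [this]
  have hosc : ∀ s u v : ℝ, |u - v| ≤ δE/2 → ‖γ s u - γ s v‖ < m := by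
    intro s u v huv
    have hdE : dist (EE u) (EE v) < δF := hEδ (by rw [Real.dist_eq]; linarith)
    have hab : dist (((cl s : ℝ) : ℂ) * EE u) (((cl s : ℝ) : ℂ) * EE v) < δF := by
      rw [dist_eq_norm, ← mul_sub, norm_mul, Complex.norm_real, Real.norm_eq_abs,
        _root_.abs_of_nonneg (cl_mem s).1]
      calc cl s * ‖EE u - EE v‖ ≤ 1 * ‖EE u - EE v‖ := by
            apply mul_le_mul_of_nonneg_right (cl_mem s).2 (norm_nonneg _)
        _ = dist (EE u) (EE v) := by rw [one_mul, dist_eq_norm]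
        _ < δF := hdE
    have := hFδ _ (hmemB s u) _ (hmemB s v) hab
    rwa [dist_eq_norm] at this
  -- choose lifts
  have hex : ∀ s : ℝ, ∃ Λ : ℝ → ℂ, Continuous Λ ∧
      ∀ t ∈ Icc (0:ℝ) 1, Complex.exp (Λ t) = γ s t :=
    fun s => exists_lift (hγc s) (hγ0 s) hm (hγm s) (half_pos hδE) (hosc s) (hlow s)
  choose Λ hΛc hΛ using hex
  set V : ℝ → ℂ := fun s => Λ s 1 - Λ s 0 with hV
  -- local constancy
  have hconst : ∀ s s' : ℝ, |s' - s| < δF → V s' = V s := by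
    intro s s' hss
    refine wind_congr (γ₁ := γ s) (γ₂ := γ s') ((hΛc s).continuousOn)
      ((hΛc s').continuousOn) (hΛ s) (hΛ s') ?_ (hloop s) (hloop s')
    intro t ht
    have hd : dist (((cl s' : ℝ) : ℂ) * EE t) (((cl s : ℝ) : ℂ) * EE t) < δF := by
      rw [dist_eq_norm, ← sub_mul, norm_mul, EE_norm, mul_one, ← Complex.ofReal_sub,
        Complex.norm_real, Real.norm_eq_abs]
      exact lt_of_le_of_lt (cl_lipschitz s' s) hss
    have h2 := hFδ _ (hmemB s' t) _ (hmemB s t) hd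
    rw [dist_eq_norm] at h2
    exact lt_of_lt_of_le h2 (hγm s t)
  -- global constancy
  have hglob : ∀ k : ℕ, ∀ s : ℝ, 0 ≤ s → s ≤ (k : ℝ) * (δF/2) → V s = V 0 := by
    intro k
    induction k with
    | zero =>
      intro s hs0 hs1
      simp only [Nat.cast_zero, zero_mul] at hs1
      have : s = 0 := le_antisymm hs1 hs0
      rw [this]
    | succ k ih =>
      intro s hs0 hs1
      by_cases hsk : s ≤ (k : ℝ) * (δF/2)
      · exact ih s hs0 hsk
      · push_neg at hsk
        have h1 : |s - (k : ℝ) * (δF/2)| < δF := by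
          rw [_root_.abs_of_nonneg (by linarith)]
          push_cast at hs1
          linarith
        have h2 : V s = V ((k : ℝ) * (δF/2)) := hconst _ _ h1
        rw [h2]
        exact ih _ (by positivity) le_rfl
  have hV1V0 : V 1 = V 0 := by
    obtain ⟨k, hk⟩ := exists_nat_ge (2/δF)
    refine hglob k 1 zero_le_one ?_
    rw [div_le_iff₀ hδF] at hk
    nlinarith
  -- V 0 = 0
  have hV0 : V 0 = 0 := by
    have hc0 : ∀ t ∈ Icc (0:ℝ) 1, Complex.exp (Λ 0 t) =
        Complex.exp ((fun _ : ℝ => Complex.log (F 0)) t) := by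
      intro t ht
      rw [hΛ 0 t ht, Complex.exp_log (hF0 0 (mem_closedBall_self zero_le_one))]
      rw [hγ]
      show F (((cl 0 : ℝ) : ℂ) * EE t) = F 0
      rw [cl_zero]
      norm_num
    have := lift_diff_eq ((hΛc 0).continuousOn) continuousOn_const hc0
    rw [hV]
    simpa using this
  -- V 1 = 2 π i
  have hγ1 : ∀ t, γ 1 t = EE t - y₀ := by
    intro t
    rw [hγ]
    show F (((cl 1 : ℝ) : ℂ) * EE t) = EE t - y₀
    rw [cl_one]
    rw [hF]
    show f (((1:ℝ) : ℂ) * EE t) - y₀ = EE t - y₀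
    rw [Complex.ofReal_one, one_mul, hb (EE t) (EE_norm t)]
  set Λβ : ℝ → ℂ := fun t => ((2 * Real.pi * cl t : ℝ) : ℂ) * Complex.I with hΛβ
  have hΛβc : Continuous Λβ := (Complex.continuous_ofReal.comp
    (continuous_const.mul cl_continuous)).mul continuous_const
  have hΛβlift : ∀ t ∈ Icc (0:ℝ) 1, Complex.exp (Λβ t) = EE t := fun t _ => rfl
  have hV1 : V 1 = Λβ 1 - Λβ 0 := by
    refine wind_congr (γ₁ := EE) (γ₂ := γ 1) hΛβc.continuousOn ((hΛc 1).continuousOn)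
      hΛβlift (hΛ 1) ?_ (by rw [EE_zero, EE_one]) (hloop 1)
    intro t ht
    rw [hγ1 t, EE_norm]
    simp only [sub_sub_cancel_left, norm_neg]
    exact hy
  have hΛβval : Λβ 1 - Λβ 0 = 2 * Real.pi * Complex.I := by
    rw [hΛβ]
    show ((2 * Real.pi * cl 1 : ℝ) : ℂ) * Complex.I - ((2 * Real.pi * cl 0 : ℝ) : ℂ) * Complex.I
      = 2 * Real.pi * Complex.I
    rw [cl_one, cl_zero]
    push_cast
    ring
  rw [hV1V0, hV0] at hV1
  rw [hΛβval] at hV1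
  have := Real.pi_ne_zero
  simp [Complex.ext_iff] at hV1

/-- If `P` is a 2-plane through the origin in `ℝ⁴`, `p` the orthogonal projection onto `P`,
and `φ` a Lipschitz map fixing every point of `P` of norm at least 1, then
`p(φ(P ∩ closedBall(0,1))) ⊇ P ∩ closedBall(0,1)`. -/
theorem proj_image_contains_disk
    (P : Submodule ℝ (EuclideanSpace ℝ (Fin 4))) (hP : Module.finrank ℝ P = 2)
    (φ : EuclideanSpace ℝ (Fin 4) → EuclideanSpace ℝ (Fin 4))
    (K : ℝ≥0) (hφ : LipschitzWith K φ)
    (hid : ∀ x ∈ P, 1 ≤ ‖x‖ → φ x = x) :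
    (P : Set (EuclideanSpace ℝ (Fin 4))) ∩ closedBall 0 1 ⊆
      (fun v => (orthogonalProjection P v : EuclideanSpace ℝ (Fin 4))) ''
        (φ '' ((P : Set (EuclideanSpace ℝ (Fin 4))) ∩ closedBall 0 1)) := by
  intro y hy
  obtain ⟨hyP, hyB⟩ := hy
  rw [mem_closedBall_zero_iff] at hyB
  let B : OrthonormalBasis (Fin 2) ℝ P := (stdOrthonormalBasis ℝ P).reindex (finCongr hP)
  let e : P ≃ₗᵢ[ℝ] ℂ := B.repr.trans Complex.orthonormalBasisOneI.repr.symm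
  set f : ℂ → ℂ := fun z =>
    e (orthogonalProjection P (φ ((e.symm z : P) : EuclideanSpace ℝ (Fin 4)))) with hf
  have hnormcoe : ∀ x : P, ‖(x : EuclideanSpace ℝ (Fin 4))‖ = ‖x‖ := fun x => rfl
  have hfc : Continuous f := by
    apply e.continuous.comp
    apply (orthogonalProjection P).continuous.comp
    exact hφ.continuous.comp (continuous_subtype_val.comp e.symm.continuous)
  have hfb : ∀ z : ℂ, ‖z‖ = 1 → f z = z := by
    intro z hz
    have hx : ‖((e.symm z : P) : EuclideanSpace ℝ (Fin 4))‖ = 1 := by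
      rw [hnormcoe, e.symm.norm_map, hz]
    rw [hf]
    show e (orthogonalProjection P (φ ((e.symm z : P) : EuclideanSpace ℝ (Fin 4)))) = z
    rw [hid _ (e.symm z).2 hx.ge, orthogonalProjection_mem_subspace_eq_self,
      e.apply_symm_apply]
  rcases eq_or_lt_of_le hyB with heq | hlt
  · -- boundary case
    refine ⟨φ y, ⟨y, ⟨hyP, by rwa [mem_closedBall_zero_iff]⟩, rfl⟩, ?_⟩
    rw [hid y hyP heq.symm.le]
    exact Submodule.starProjection_eq_self_iff.mpr hyP
  · by_contra hcon
    set y₀ : ℂ := e ⟨y, hyP⟩ with hy₀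
    have hy₀lt : ‖y₀‖ < 1 := by
      rw [hy₀, e.norm_map]
      exact lt_of_le_of_lt (le_of_eq (hnormcoe ⟨y, hyP⟩).symm) (by simpa using hlt)
    refine no_retraction hfc hfb hy₀lt ?_
    intro z hz hfz
    apply hcon
    set x : EuclideanSpace ℝ (Fin 4) := ((e.symm z : P) : EuclideanSpace ℝ (Fin 4)) with hxd
    have hxP : x ∈ P := (e.symm z).2
    have hxB : x ∈ closedBall (0 : EuclideanSpace ℝ (Fin 4)) 1 := by
      rw [mem_closedBall_zero_iff, hxd, hnormcoe, e.symm.norm_map]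
      exact mem_closedBall_zero_iff.mp hz
    refine ⟨φ x, ⟨x, ⟨hxP, hxB⟩, rfl⟩, ?_⟩
    have h3 : orthogonalProjection P (φ x) = ⟨y, hyP⟩ := by
      apply e.injective
      exact hfz
    show ((orthogonalProjection P (φ x) : P) : EuclideanSpace ℝ (Fin 4)) = y
    rw [h3]
end
end

section
/- For every 0 < ε < 1 there exists C = C(ε) > 100 such that: if 0 < r₀ < 1, δ > 0, and u ∈ C¹(B(0,1) \ B(0,r₀), ℝ) satisfies u > δ r₀ − δ r₀/C on ∂B(0,r₀) and u < δ r₀ / C on ∂B(0,1), then ∫_{B(0,1)\B(0,r₀)} |∇u|² ≥ ε · 2π δ² r₀² / |log r₀|. -/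
open Metric MeasureTheory Real Complex
open scoped Real

set_option maxHeartbeats 1000000

lemma my_integrableOn_of_bounded {α E : Type*} [MeasurableSpace α] [NormedAddCommGroup E]
    {μ : Measure α} {s : Set α} {f : α → E} {M : ℝ} (hμ : μ s ≠ ⊤)
    (hmeas : AEStronglyMeasurable f (μ.restrict s)) (hs : MeasurableSet s)
    (hbd : ∀ x ∈ s, ‖f x‖ ≤ M) : IntegrableOn f s μ :=
  ⟨hmeas, HasFiniteIntegral.restrict_of_bounded M (lt_top_iff_ne_top.2 hμ)
    ((ae_restrict_iff' hs).2 (ae_of_all _ hbd))⟩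

lemma my_uniqueDiffOn_annulus {r₀ : ℝ} (h0 : 0 < r₀) (h1 : r₀ < 1) :
    UniqueDiffOn ℝ (closedBall (0:ℂ) 1 \ ball 0 r₀) := by
  intro x hx
  have hx1 : ‖x‖ ≤ 1 := by simpa [dist_eq_norm] using hx.1
  have hx2 : r₀ ≤ ‖x‖ := by
    have := hx.2
    simp only [Set.mem_diff, mem_ball, dist_eq_norm, sub_zero, not_lt] at this
    exact this
  have hxpos : (0:ℝ) < ‖x‖ := lt_of_lt_of_le h0 hx2
  set a : ℝ := (r₀ + 1)/2 with ha
  set ρ : ℝ := (1 - r₀)/2 with hρ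
  have hρpos : 0 < ρ := by rw [hρ]; linarith
  set c : ℂ := ((a/‖x‖ : ℝ)) • x with hc
  have hcn : ‖c‖ = a := by
    rw [hc, norm_smul, Real.norm_eq_abs, _root_.abs_of_pos (by positivity), div_mul_cancel₀]
    exact ne_of_gt hxpos
  have hsub : closedBall c ρ ⊆ closedBall (0:ℂ) 1 \ ball 0 r₀ := by
    intro y hy
    have hyc : ‖y - c‖ ≤ ρ := by simpa [dist_eq_norm] using hy
    have hy1 : ‖y‖ ≤ ‖c‖ + ‖y - c‖ := norm_le_norm_add_norm_sub' y c
    have hy2 : ‖c‖ - ‖y - c‖ ≤ ‖y‖ := by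
      have := norm_sub_norm_le c y
      have h' : ‖c - y‖ = ‖y - c‖ := norm_sub_rev c y
      linarith
    constructor
    · simp only [mem_closedBall, dist_eq_norm, sub_zero]
      rw [hcn] at hy1; rw [ha, hρ] at *; linarith
    · simp only [mem_ball, dist_eq_norm, sub_zero, not_lt]
      rw [hcn] at hy2; rw [ha, hρ] at *; linarith
  have hxmem : x ∈ closedBall c ρ := by
    have hdec : x - c = ((1 : ℝ) - a/‖x‖) • x := by
      rw [hc, sub_smul, one_smul]
    have hnorm : ‖x - c‖ = |1 - a/‖x‖| * ‖x‖ := by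
      rw [hdec, norm_smul, Real.norm_eq_abs]
    have heq : (1 : ℝ) - a/‖x‖ = (‖x‖ - a)/‖x‖ := by
      rw [sub_div, div_self (ne_of_gt hxpos)]
    have : ‖x - c‖ = |‖x‖ - a| := by
      rw [hnorm, heq, abs_div, _root_.abs_of_pos hxpos, div_mul_cancel₀]
      exact ne_of_gt hxpos
    simp only [mem_closedBall, dist_eq_norm, this]
    rw [abs_le]; constructor <;> (rw [ha, hρ] at *; linarith)
  exact (uniqueDiffWithinAt_convex (convex_closedBall c ρ)
    (by rw [interior_closedBall c (ne_of_gt hρpos)]; exact ⟨c, mem_ball_self hρpos⟩)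
    (subset_closure hxmem)).mono hsub

lemma ray_lower_bound {r₀ m M : ℝ} (hr0 : 0 < r₀) (hr1 : r₀ < 1) (hm : 0 < m) (hM : 0 ≤ M)
    {u : ℂ → ℝ} (hu : ContDiffOn ℝ 1 u (closedBall 0 1 \ ball 0 r₀))
    {c : ℂ} (hc : ‖c‖ = 1)
    (hbd : ∀ x ∈ ball (0:ℂ) 1 \ closedBall 0 r₀, ‖fderiv ℝ u x‖ ≤ M)
    (hval : m < u ((r₀ : ℝ) • c) - u ((1:ℝ) • c)) :
    m^2 / (-Real.log r₀) ≤ ∫ r in Set.Ioo r₀ 1, r * ‖fderiv ℝ u ((r : ℝ) • c)‖^2 := by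
  have hL : 0 < -Real.log r₀ := by have := Real.log_neg hr0 hr1; linarith
  set L : ℝ := -Real.log r₀ with hLdef
  set lam : ℝ := m / L with hlam
  have hlampos : 0 < lam := div_pos hm hL
  set s : Set ℂ := closedBall 0 1 \ ball 0 r₀ with hsdef
  set A : Set ℂ := ball (0:ℂ) 1 \ closedBall 0 r₀ with hAdef
  have hAopen : IsOpen A := isOpen_ball.sdiff isClosed_closedBall
  have hAs : A ⊆ s := Set.diff_subset_diff ball_subset_closedBall ball_subset_closedBall
  have hnorm : ∀ r : ℝ, 0 ≤ r → ‖(r : ℝ) • c‖ = r := fun r hr => by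
    rw [norm_smul, Real.norm_eq_abs, hc, mul_one, _root_.abs_of_nonneg hr]
  have hmemA : ∀ r ∈ Set.Ioo r₀ 1, (r : ℝ) • c ∈ A := by
    intro r hr
    constructor
    · simp only [mem_ball, dist_eq_norm, sub_zero, hnorm r (le_of_lt (lt_trans hr0 hr.1))]
      exact hr.2
    · simp only [mem_closedBall, dist_eq_norm, sub_zero, not_le,
        hnorm r (le_of_lt (lt_trans hr0 hr.1))]
      exact hr.1
  have hnhds : ∀ r ∈ Set.Ioo r₀ 1, s ∈ nhds ((r : ℝ) • c) := fun r hr =>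
    mem_nhds_iff.2 ⟨A, hAs, hAopen, hmemA r hr⟩
  set D : ℝ → ℝ := fun r => (fderiv ℝ u (r • c)) c with hDdef
  have hderiv : ∀ r ∈ Set.Ioo r₀ 1, HasDerivAt (fun t : ℝ => u (t • c)) (D r) r := by
    intro r hr
    have hφ : HasDerivAt (fun t : ℝ => t • c) c r := by
      simpa using (hasDerivAt_id r).smul_const c
    have hdiff : DifferentiableAt ℝ u (r • c) :=
      (hu.contDiffAt (hnhds r hr)).differentiableAt one_ne_zero
    exact hdiff.hasFDerivAt.comp_hasDerivAt r hφ
  have habs : ∀ r : ℝ, |D r| ≤ ‖fderiv ℝ u (r • c)‖ := by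
    intro r
    have := (fderiv ℝ u (r • c)).le_opNorm c
    rw [hc, mul_one] at this
    rw [Real.norm_eq_abs] at this; exact this
  have hDle : ∀ r ∈ Set.Ioo r₀ 1, |D r| ≤ M := fun r hr =>
    le_trans (habs r) (hbd _ (hmemA r hr))
  have hφcont : Continuous (fun r : ℝ => r • c) := continuous_id.smul continuous_const
  have hDmeas : Measurable D := by
    have h1 : Measurable fun r : ℝ => fderiv ℝ u (r • c) :=
      (measurable_fderiv ℝ u).comp hφcont.measurable
    exact (ContinuousLinearMap.apply ℝ ℝ c).continuous.measurable.comp h1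
  have hDintIoo : IntegrableOn D (Set.Ioo r₀ 1) :=
    my_integrableOn_of_bounded measure_Ioo_lt_top.ne hDmeas.aestronglyMeasurable
      measurableSet_Ioo (fun r hr => by rw [Real.norm_eq_abs]; exact hDle r hr)
  have hDii : IntervalIntegrable D volume r₀ 1 :=
    (intervalIntegrable_iff_integrableOn_Ioc_of_le hr1.le).2
      (hDintIoo.congr_set_ae Ioo_ae_eq_Ioc.symm)
  have hcontG : ContinuousOn (fun t : ℝ => u (t • c)) (Set.Icc r₀ 1) := by
    apply hu.continuousOn.comp hφcont.continuousOn
    intro t ht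
    constructor
    · simp only [mem_closedBall, dist_eq_norm, sub_zero, hnorm t (le_trans hr0.le ht.1)]
      exact ht.2
    · simp only [mem_ball, dist_eq_norm, sub_zero, not_lt,
        hnorm t (le_trans hr0.le ht.1)]
      exact ht.1
  have hftc : ∫ r in r₀..1, D r = u ((1:ℝ) • c) - u ((r₀:ℝ) • c) :=
    intervalIntegral.integral_eq_sub_of_hasDerivAt_of_le hr1.le hcontG hderiv hDii
  have hJ : m ≤ ∫ r in r₀..1, |D r| := by
    have h1 : |∫ r in r₀..1, D r| ≤ ∫ r in r₀..1, |D r| :=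
      intervalIntegral.abs_integral_le_integral_abs hr1.le
    have h2 := neg_le_abs (∫ r in r₀..1, D r)
    rw [hftc] at h1 h2
    linarith
  have h1r_int : IntegrableOn (fun r : ℝ => 1 / r) (Set.Ioo r₀ 1) := by
    apply (ContinuousOn.integrableOn_compact isCompact_Icc ?_).mono_set Set.Ioo_subset_Icc_self
    exact continuousOn_const.div continuousOn_id
      (fun x hx => ne_of_gt (lt_of_lt_of_le hr0 hx.1))
  have hIoo_abs : ∫ r in Set.Ioo r₀ 1, |D r| = ∫ r in r₀..1, |D r| := by
    rw [intervalIntegral.integral_of_le hr1.le, integral_Ioc_eq_integral_Ioo]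
  have hlog : ∫ r in Set.Ioo r₀ 1, 1 / r = L := by
    rw [← integral_Ioc_eq_integral_Ioo, ← intervalIntegral.integral_of_le hr1.le]
    rw [integral_one_div ?h0]
    · rw [one_div, Real.log_inv]
    · rw [Set.uIcc_of_le hr1.le]
      exact fun h => absurd h.1 (not_le.2 hr0)
  have hptw : ∀ r ∈ Set.Ioo r₀ 1,
      2 * lam * |D r| - lam ^ 2 * (1 / r) ≤ r * ‖fderiv ℝ u ((r : ℝ) • c)‖ ^ 2 := by
    intro r hr
    have hrpos : 0 < r := lt_trans hr0 hr.1
    have h1 : |D r| ≤ ‖fderiv ℝ u (r • c)‖ := habs r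
    have h3 : r * |D r| ^ 2 + lam ^ 2 * (1 / r) - 2 * lam * |D r|
        = (r * |D r| - lam) ^ 2 / r := by
      field_simp; ring
    have h5 : (0:ℝ) ≤ (r * |D r| - lam) ^ 2 / r := div_nonneg (sq_nonneg _) hrpos.le
    have hsq : |D r| ^ 2 ≤ ‖fderiv ℝ u (r • c)‖ ^ 2 := by
      nlinarith [abs_nonneg (D r)]
    have h4 : r * |D r| ^ 2 ≤ r * ‖fderiv ℝ u (r • c)‖ ^ 2 :=
      mul_le_mul_of_nonneg_left hsq hrpos.le
    linarith
  have hLHSint : IntegrableOn (fun r : ℝ => 2 * lam * |D r| - lam ^ 2 * (1 / r))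
      (Set.Ioo r₀ 1) := (hDintIoo.abs.const_mul (2 * lam)).sub (h1r_int.const_mul (lam ^ 2))
  have hRHSint : IntegrableOn (fun r : ℝ => r * ‖fderiv ℝ u ((r : ℝ) • c)‖ ^ 2)
      (Set.Ioo r₀ 1) := by
    apply my_integrableOn_of_bounded (M := M ^ 2) measure_Ioo_lt_top.ne
      ?_ measurableSet_Ioo ?_
    · exact (measurable_id.mul
        (((measurable_fderiv ℝ u).comp hφcont.measurable).norm.pow_const 2)).aestronglyMeasurable
    · intro r hr
      have hrpos : 0 < r := lt_trans hr0 hr.1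
      have hN : ‖fderiv ℝ u (r • c)‖ ≤ M := hbd _ (hmemA r hr)
      have hNn : 0 ≤ ‖fderiv ℝ u (r • c)‖ := norm_nonneg _
      rw [Real.norm_eq_abs, _root_.abs_of_nonneg (by positivity)]
      have hsq : ‖fderiv ℝ u (r • c)‖ ^ 2 ≤ M ^ 2 := by nlinarith
      nlinarith [mul_nonneg (sub_nonneg.2 hr.2.le) (sq_nonneg ‖fderiv ℝ u (r • c)‖)]
  have hmono := setIntegral_mono_on hLHSint hRHSint measurableSet_Ioo hptw
  have hLHSval : ∫ r in Set.Ioo r₀ 1, (2 * lam * |D r| - lam ^ 2 * (1 / r))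
      = 2 * lam * (∫ r in r₀..1, |D r|) - lam ^ 2 * L := by
    rw [integral_sub (hDintIoo.abs.const_mul (2 * lam)) (h1r_int.const_mul (lam ^ 2)),
      MeasureTheory.integral_const_mul, MeasureTheory.integral_const_mul, hIoo_abs, hlog]
  have hkey : m ^ 2 / L ≤ 2 * lam * (∫ r in r₀..1, |D r|) - lam ^ 2 * L := by
    have heq : 2 * lam * m - lam ^ 2 * L = m ^ 2 / L := by
      rw [hlam]; field_simp; ring
    nlinarith [mul_le_mul_of_nonneg_left hJ (by positivity : (0:ℝ) ≤ 2 * lam)]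
  rw [hLHSval] at hmono
  exact le_trans hkey hmono

/-- For every `0 < ε < 1` there is `C > 100` such that any `C¹` function `u` on the closed
annulus `closure(B(0,1)) \ B(0,r₀)` with `u > δr₀ − δr₀/C` on the inner circle and
`u < δr₀/C` on the unit circle satisfies `∫ |∇u|² ≥ ε · 2π δ² r₀² / |log r₀|`. -/
theorem dirichlet_energy_almost_level_lower_bound
    (ε : ℝ) (hε0 : 0 < ε) (hε1 : ε < 1) :
    ∃ C : ℝ, 100 < C ∧
      ∀ (r₀ δ : ℝ), 0 < r₀ → r₀ < 1 → 0 < δ →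
      ∀ u : ℂ → ℝ, ContDiffOn ℝ 1 u (closedBall 0 1 \ ball 0 r₀) →
        (∀ x ∈ sphere (0 : ℂ) r₀, δ * r₀ - δ * r₀ / C < u x) →
        (∀ x ∈ sphere (0 : ℂ) 1, u x < δ * r₀ / C) →
        ε * (2 * π * δ ^ 2 * r₀ ^ 2 / |Real.log r₀|)
          ≤ ∫ x in ball (0 : ℂ) 1 \ ball 0 r₀, ‖fderiv ℝ u x‖ ^ 2 := by
  have hsε1 : Real.sqrt ε < 1 := by
    have := Real.sqrt_lt_sqrt hε0.le hε1
    simpa [Real.sqrt_one] using this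
  have hsε0 : 0 < Real.sqrt ε := Real.sqrt_pos.2 hε0
  have h1ε : 0 < 1 - Real.sqrt ε := by linarith
  refine ⟨101 + 2 / (1 - Real.sqrt ε), ?_, ?_⟩
  · have h2 : 0 < 2 / (1 - Real.sqrt ε) := by positivity
    linarith
  set C : ℝ := 101 + 2 / (1 - Real.sqrt ε) with hCdef
  intro r₀ δ hr0 hr1 hδ u hu hinner houter
  have hCpos : 0 < C := by
    have h2 : 0 < 2 / (1 - Real.sqrt ε) := by positivity
    rw [hCdef]; linarith
  have hC2 : 2 / C ≤ 1 - Real.sqrt ε := by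
    rw [div_le_iff₀ hCpos]
    have h2 : (1 - Real.sqrt ε) * C = 101 * (1 - Real.sqrt ε) + 2 := by
      rw [hCdef]; field_simp
    nlinarith
  set m : ℝ := δ * r₀ - 2 * (δ * r₀ / C) with hmdef
  have hfrac : m = δ * r₀ * (1 - 2 / C) := by rw [hmdef]; field_simp
  have hmlb : δ * r₀ * Real.sqrt ε ≤ m := by
    rw [hfrac]
    exact mul_le_mul_of_nonneg_left (by linarith) (by positivity)
  have hm : 0 < m := lt_of_lt_of_le (by positivity) hmlb
  have hm2 : ε * (δ ^ 2 * r₀ ^ 2) ≤ m ^ 2 := by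
    have hprod : (δ * r₀ * Real.sqrt ε) * (δ * r₀ * Real.sqrt ε) ≤ m * m :=
      mul_le_mul hmlb hmlb (by positivity) hm.le
    nlinarith [Real.sq_sqrt hε0.le]
  have hL : 0 < -Real.log r₀ := by have := Real.log_neg hr0 hr1; linarith
  have habs_log : |Real.log r₀| = -Real.log r₀ := abs_of_neg (Real.log_neg hr0 hr1)
  set s : Set ℂ := closedBall 0 1 \ ball 0 r₀ with hsdef
  set A : Set ℂ := ball (0:ℂ) 1 \ closedBall 0 r₀ with hAdef
  have hAopen : IsOpen A := isOpen_ball.sdiff isClosed_closedBall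
  have hAmeas : MeasurableSet A := hAopen.measurableSet
  have hAs : A ⊆ s := Set.diff_subset_diff ball_subset_closedBall ball_subset_closedBall
  have hUD : UniqueDiffOn ℝ s := my_uniqueDiffOn_annulus hr0 hr1
  have hscomp : IsCompact s := (isCompact_closedBall _ _).diff isOpen_ball
  have hgc : ContinuousOn (fderivWithin ℝ u s) s := hu.continuousOn_fderivWithin hUD le_rfl
  obtain ⟨M, hM⟩ := hscomp.exists_bound_of_continuousOn hgc
  set M' : ℝ := max M 0 with hM'def
  have hM'0 : 0 ≤ M' := le_max_right _ _
  have hfd_eq : ∀ x ∈ A, fderiv ℝ u x = fderivWithin ℝ u s x := fun x hx =>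
    (fderivWithin_of_mem_nhds (mem_nhds_iff.2 ⟨A, hAs, hAopen, hx⟩)).symm
  have hbdA : ∀ x ∈ A, ‖fderiv ℝ u x‖ ≤ M' := fun x hx => by
    rw [hfd_eq x hx]; exact le_trans (hM x (hAs hx)) (le_max_left _ _)
  have hhmeas : Measurable fun x : ℂ => ‖fderiv ℝ u x‖ ^ 2 :=
    (measurable_fderiv ℝ u).norm.pow_const 2
  -- Step A : replace the domain by the open annulus A
  have hsetae : (ball (0:ℂ) 1 \ ball 0 r₀ : Set ℂ) =ᵐ[volume] A := by
    rw [ae_eq_set]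
    constructor
    · apply measure_mono_null ?_ (Measure.addHaar_sphere volume (0:ℂ) r₀)
      intro x hx
      have h3 : x ∈ closedBall (0:ℂ) r₀ := by
        by_contra hcon
        exact hx.2 ⟨hx.1.1, hcon⟩
      have h4 : x ∉ ball (0:ℂ) r₀ := hx.1.2
      have h5 : dist x 0 ≤ r₀ := mem_closedBall.1 h3
      have h6 : r₀ ≤ dist x 0 := not_lt.1 (fun hc => h4 (mem_ball.2 hc))
      exact mem_sphere.2 (le_antisymm h5 h6)
    · have hempty : A \ (ball (0:ℂ) 1 \ ball 0 r₀) = ∅ :=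
        Set.diff_eq_empty.2 (Set.diff_subset_diff (subset_refl _) ball_subset_closedBall)
      rw [hempty]; exact measure_empty
  have hEeq1 : ∫ x in ball (0:ℂ) 1 \ ball 0 r₀, ‖fderiv ℝ u x‖ ^ 2
      = ∫ x in A, ‖fderiv ℝ u x‖ ^ 2 := setIntegral_congr_set hsetae
  -- Step B : polar coordinates
  have hEeq2 : ∫ x in A, ‖fderiv ℝ u x‖ ^ 2
      = ∫ x, A.indicator (fun x => ‖fderiv ℝ u x‖ ^ 2) x :=
    (integral_indicator hAmeas).symm
  set T : Set (ℝ × ℝ) := Set.Ioo r₀ 1 ×ˢ Set.Ioo (-π) π with hTdef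
  have hTmeas : MeasurableSet T := measurableSet_Ioo.prod measurableSet_Ioo
  set F : ℝ × ℝ → ℝ := fun p => p.1 * ‖fderiv ℝ u (Complex.polarCoord.symm p)‖ ^ 2 with hFdef
  have hpolar := Complex.integral_comp_polarCoord_symm
    (A.indicator (fun x => ‖fderiv ℝ u x‖ ^ 2))
  have hsymm_mem : ∀ p : ℝ × ℝ, 0 < p.1 →
      (Complex.polarCoord.symm p ∈ A ↔ p.1 ∈ Set.Ioo r₀ 1) := by
    intro p hp
    have habs : ‖Complex.polarCoord.symm p‖ = p.1 := by
      rw [Complex.norm_polarCoord_symm, _root_.abs_of_pos hp]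
    constructor
    · rintro ⟨h1, h2⟩
      rw [mem_ball_zero_iff, habs] at h1
      refine ⟨?_, h1⟩
      by_contra hcon
      exact h2 (mem_closedBall_zero_iff.2 (by rw [habs]; linarith))
    · rintro ⟨h1, h2⟩
      constructor
      · exact mem_ball_zero_iff.2 (by rw [habs]; exact h2)
      · intro hc
        have := mem_closedBall_zero_iff.1 hc
        rw [habs] at this
        linarith
  have hTsub : T ⊆ Complex.polarCoord.target := by
    rw [Complex.polarCoord_target, hTdef]
    exact Set.prod_mono (fun x hx => lt_trans hr0 hx.1) (subset_refl _)
  have htargetmeas : MeasurableSet Complex.polarCoord.target := by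
    rw [Complex.polarCoord_target]
    exact measurableSet_Ioi.prod measurableSet_Ioo
  have hind : ∀ p ∈ Complex.polarCoord.target,
      p.1 • A.indicator (fun x => ‖fderiv ℝ u x‖ ^ 2) (Complex.polarCoord.symm p)
        = T.indicator F p := by
    intro p hp
    rw [Complex.polarCoord_target] at hp
    have hp1 : 0 < p.1 := hp.1
    by_cases hmem : p.1 ∈ Set.Ioo r₀ 1
    · rw [Set.indicator_of_mem ((hsymm_mem p hp1).2 hmem),
        Set.indicator_of_mem (by rw [hTdef]; exact ⟨hmem, hp.2⟩), hFdef, smul_eq_mul]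
    · rw [Set.indicator_of_notMem (fun hc => hmem ((hsymm_mem p hp1).1 hc)),
        Set.indicator_of_notMem (fun hc => hmem (by rw [hTdef] at hc; exact hc.1)), smul_zero]
  have hstep : ∫ p in Complex.polarCoord.target,
      p.1 • A.indicator (fun x => ‖fderiv ℝ u x‖ ^ 2) (Complex.polarCoord.symm p)
      = ∫ p in T, F p := by
    rw [setIntegral_congr_fun htargetmeas hind, setIntegral_indicator hTmeas,
      Set.inter_eq_self_of_subset_right hTsub]
  -- Step C : integrability of F on T
  have hψ : ∀ p : ℝ × ℝ, Complex.polarCoord.symm p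
      = (p.1 : ℂ) * (Real.cos p.2 + Real.sin p.2 * Complex.I) :=
    Complex.polarCoord_symm_apply
  have hFmeas : Measurable F := by
    have hcont : Continuous fun p : ℝ × ℝ =>
        ((p.1 : ℂ) * (Real.cos p.2 + Real.sin p.2 * Complex.I)) := by
      apply Continuous.mul
      · exact Complex.continuous_ofReal.comp continuous_fst
      · apply Continuous.add
        · exact Complex.continuous_ofReal.comp (Real.continuous_cos.comp continuous_snd)
        · exact ((Complex.continuous_ofReal.comp
            (Real.continuous_sin.comp continuous_snd)).mul continuous_const)
    have heqf : (fun p : ℝ × ℝ => ‖fderiv ℝ u (Complex.polarCoord.symm p)‖ ^ 2)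
        = fun p : ℝ × ℝ =>
          ‖fderiv ℝ u ((p.1 : ℂ) * (Real.cos p.2 + Real.sin p.2 * Complex.I))‖ ^ 2 :=
      funext fun p => by rw [hψ p]
    rw [hFdef]
    apply measurable_fst.mul
    rw [heqf]
    exact hhmeas.comp hcont.measurable
  have hTfin : volume T ≠ ⊤ := by
    rw [hTdef]
    have hv : (volume : Measure (ℝ × ℝ)) (Set.Ioo r₀ 1 ×ˢ Set.Ioo (-π) π)
        = volume (Set.Ioo r₀ 1) * volume (Set.Ioo (-π) π) := by
      rw [show (volume : Measure (ℝ × ℝ)) = (volume : Measure ℝ).prod volume from rfl,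
        Measure.prod_prod]
    rw [hv]
    exact ENNReal.mul_ne_top measure_Ioo_lt_top.ne measure_Ioo_lt_top.ne
  have hFbd : ∀ p ∈ T, ‖F p‖ ≤ M' ^ 2 := by
    intro p hp
    rw [hTdef] at hp
    have hp1 : 0 < p.1 := lt_trans hr0 hp.1.1
    have hmem : Complex.polarCoord.symm p ∈ A := (hsymm_mem p hp1).2 hp.1
    have hb := hbdA _ hmem
    have hNn : 0 ≤ ‖fderiv ℝ u (Complex.polarCoord.symm p)‖ := norm_nonneg _
    rw [hFdef]
    beta_reduce
    rw [Real.norm_eq_abs, _root_.abs_of_nonneg (by positivity)]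
    have hsq : ‖fderiv ℝ u (Complex.polarCoord.symm p)‖ ^ 2 ≤ M' ^ 2 := by nlinarith
    nlinarith [hp.1.2, mul_nonneg (sub_nonneg.2 hp.1.2.le)
      (sq_nonneg ‖fderiv ℝ u (Complex.polarCoord.symm p)‖)]
  have hFint : IntegrableOn F T :=
    my_integrableOn_of_bounded hTfin hFmeas.aestronglyMeasurable hTmeas hFbd
  have hFint' : Integrable F (((volume : Measure ℝ).restrict (Set.Ioo r₀ 1)).prod
      ((volume : Measure ℝ).restrict (Set.Ioo (-π) π))) := by
    rw [Measure.prod_restrict, ← hTdef]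
    rw [← Measure.volume_eq_prod]
    exact hFint
  have hFint2 : IntegrableOn F (Set.Ioo r₀ 1 ×ˢ Set.Ioo (-π) π)
      ((volume : Measure ℝ).prod volume) := by
    rw [← Measure.volume_eq_prod, ← hTdef]; exact hFint
  have hfub1 : ∫ p in T, F p = ∫ r in Set.Ioo r₀ 1, ∫ θ in Set.Ioo (-π) π, F (r, θ) := by
    rw [hTdef, Measure.volume_eq_prod]
    exact setIntegral_prod F hFint2
  have hfub2 : ∫ r in Set.Ioo r₀ 1, ∫ θ in Set.Ioo (-π) π, F (r, θ)
      = ∫ θ in Set.Ioo (-π) π, ∫ r in Set.Ioo r₀ 1, F (r, θ) :=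
    integral_integral_swap hFint'
  -- Step D : per-ray lower bound
  have hray : ∀ θ ∈ Set.Ioo (-π) π,
      m ^ 2 / (-Real.log r₀) ≤ ∫ r in Set.Ioo r₀ 1, F (r, θ) := by
    intro θ hθ
    set c : ℂ := Real.cos θ + Real.sin θ * Complex.I with hcdef
    have hcn : ‖c‖ = 1 := by
      rw [hcdef, Complex.ofReal_cos, Complex.ofReal_sin]
      exact Complex.norm_cos_add_sin_mul_I θ
    have hFval : ∀ r : ℝ, F (r, θ) = r * ‖fderiv ℝ u ((r : ℝ) • c)‖ ^ 2 := by
      intro r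
      have hsymmval : Complex.polarCoord.symm (r, θ) = (r : ℝ) • c := by
        rw [hψ (r, θ), hcdef, Complex.real_smul]
      simp only [hFdef, hsymmval]
    have hsph : ∀ r : ℝ, 0 ≤ r → ‖(r : ℝ) • c‖ = r := fun r hr => by
      rw [norm_smul, Real.norm_eq_abs, hcn, mul_one, _root_.abs_of_nonneg hr]
    have hin : δ * r₀ - δ * r₀ / C < u ((r₀ : ℝ) • c) := by
      apply hinner
      rw [mem_sphere, dist_zero_right, hsph r₀ hr0.le]
    have hout : u ((1 : ℝ) • c) < δ * r₀ / C := by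
      apply houter
      rw [mem_sphere, dist_zero_right, hsph 1 zero_le_one]
    have hval : m < u ((r₀ : ℝ) • c) - u ((1 : ℝ) • c) := by
      rw [hmdef]; linarith
    have hraybd := ray_lower_bound hr0 hr1 hm hM'0 hu hcn hbdA hval
    calc m ^ 2 / (-Real.log r₀)
        ≤ ∫ r in Set.Ioo r₀ 1, r * ‖fderiv ℝ u ((r : ℝ) • c)‖ ^ 2 := hraybd
      _ = ∫ r in Set.Ioo r₀ 1, F (r, θ) := by
          apply setIntegral_congr_fun measurableSet_Ioo
          intro r _
          exact (hFval r).symm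
  -- Step E : integrate over angles
  have hinner_int : Integrable (fun θ => ∫ r in Set.Ioo r₀ 1, F (r, θ))
      ((volume : Measure ℝ).restrict (Set.Ioo (-π) π)) :=
    hFint'.integral_prod_right
  have houter_mono : ∫ _θ in Set.Ioo (-π) π, (m ^ 2 / (-Real.log r₀))
      ≤ ∫ θ in Set.Ioo (-π) π, ∫ r in Set.Ioo r₀ 1, F (r, θ) :=
    setIntegral_mono_on (integrableOn_const measure_Ioo_lt_top.ne)
      hinner_int measurableSet_Ioo hray
  have hconst : ∫ _θ in Set.Ioo (-π) π, (m ^ 2 / (-Real.log r₀))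
      = 2 * π * (m ^ 2 / (-Real.log r₀)) := by
    rw [setIntegral_const, Measure.real, Real.volume_Ioo,
      ENNReal.toReal_ofReal (by linarith [Real.pi_pos] : (0:ℝ) ≤ π - -π), smul_eq_mul]
    ring
  -- final arithmetic
  have hfinal : ε * (2 * π * δ ^ 2 * r₀ ^ 2 / |Real.log r₀|)
      ≤ 2 * π * (m ^ 2 / (-Real.log r₀)) := by
    rw [habs_log]
    have he1 : ε * (2 * π * δ ^ 2 * r₀ ^ 2 / (-Real.log r₀))
        = 2 * π * (ε * (δ ^ 2 * r₀ ^ 2)) / (-Real.log r₀) := by ring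
    have he2 : 2 * π * (m ^ 2 / (-Real.log r₀)) = 2 * π * m ^ 2 / (-Real.log r₀) := by ring
    rw [he1, he2, div_le_div_iff₀ hL hL]
    have hnum : 2 * π * (ε * (δ ^ 2 * r₀ ^ 2)) ≤ 2 * π * m ^ 2 := by
      nlinarith [mul_le_mul_of_nonneg_left hm2 (by positivity : (0:ℝ) ≤ 2 * π)]
    nlinarith [mul_le_mul_of_nonneg_right hnum hL.le]
  calc ε * (2 * π * δ ^ 2 * r₀ ^ 2 / |Real.log r₀|)
      ≤ 2 * π * (m ^ 2 / (-Real.log r₀)) := hfinal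
    _ = ∫ _θ in Set.Ioo (-π) π, (m ^ 2 / (-Real.log r₀)) := hconst.symm
    _ ≤ ∫ θ in Set.Ioo (-π) π, ∫ r in Set.Ioo r₀ 1, F (r, θ) := houter_mono
    _ = ∫ r in Set.Ioo r₀ 1, ∫ θ in Set.Ioo (-π) π, F (r, θ) := hfub2.symm
    _ = ∫ p in T, F p := hfub1.symm
    _ = ∫ p in Complex.polarCoord.target,
          p.1 • A.indicator (fun x => ‖fderiv ℝ u x‖ ^ 2) (Complex.polarCoord.symm p) :=
        hstep.symm
    _ = ∫ x, A.indicator (fun x => ‖fderiv ℝ u x‖ ^ 2) x := hpolar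
    _ = ∫ x in A, ‖fderiv ℝ u x‖ ^ 2 := hEeq2.symm
    _ = ∫ x in ball (0:ℂ) 1 \ ball 0 r₀, ‖fderiv ℝ u x‖ ^ 2 := hEeq1.symm
end
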